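/- arXiv:2112.12811 — 5 statements merged into one kernel-verified Lean document; each statement's English description precedes it below -/
import Mathlib

section
/- The subspace of (4n+1)×(4n+1) matrices Y (blocks Y_{ij}, i,j ∈ [−n,n], with Y_{00}=0) satisfying I Y_{−i,−j} + Y_{−j,−i}^T I = 0, J Y_{i,j} + Y_{j,i}^T J = 0, I Y_{−i,j} + Y_{j,−i}^T J = 0 for i,j ∈ [1,n], and Y_{0,−j} + Y_{−j,0}^T I = 0, Y_{0,j} − Y_{j,0}^T J = 0 for j ∈ [0,n], is closed under the graded bracket ⟦x,y⟧ = xy − (−1)^{a·b} yx. -/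
open Matrix

noncomputable section

/-- The 2×2 matrix `I = [[0,1],[1,0]]`. -/
def IM : Matrix (Fin 2) (Fin 2) ℂ := !![0, 1; 1, 0]

/-- The 2×2 matrix `J = [[0,1],[−1,0]]`. -/
def JM : Matrix (Fin 2) (Fin 2) ℂ := !![0, 1; -1, 0]

/-- Starting position of block `i`: `2i−1` for `i > 0`, `2i` for `i ≤ 0`. -/
def pstart (i : ℤ) : ℤ := if 0 < i then 2 * i - 1 else 2 * i

/-- The `Fin (4n+1)` index corresponding to position `p ∈ [−2n, 2n]`. -/
def finOf (n : ℕ) (p : ℤ) : Fin (4 * n + 1) :=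
  ⟨(p + 2 * n).toNat % (4 * n + 1), Nat.mod_lt _ (by omega)⟩

/-- The entry of a `(4n+1)×(4n+1)` matrix at positions `p, q ∈ [−2n, 2n]`. -/
def ent (n : ℕ) (Y : Matrix (Fin (4 * n + 1)) (Fin (4 * n + 1)) ℂ) (p q : ℤ) : ℂ :=
  Y (finOf n p) (finOf n q)

/-- The 2×2 block `Y_{ij}` for `i, j ≠ 0`. -/
def blk (n : ℕ) (Y : Matrix (Fin (4 * n + 1)) (Fin (4 * n + 1)) ℂ) (i j : ℤ) :
    Matrix (Fin 2) (Fin 2) ℂ :=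
  Matrix.of fun a b => ent n Y (pstart i + (a.val : ℤ)) (pstart j + (b.val : ℤ))

/-- The 1×2 block `Y_{0,j}` for `j ≠ 0`. -/
def blkRow (n : ℕ) (Y : Matrix (Fin (4 * n + 1)) (Fin (4 * n + 1)) ℂ) (j : ℤ) :
    Matrix (Fin 1) (Fin 2) ℂ :=
  Matrix.of fun _ b => ent n Y 0 (pstart j + (b.val : ℤ))

/-- The 2×1 block `Y_{j,0}` for `j ≠ 0`. -/
def blkCol (n : ℕ) (Y : Matrix (Fin (4 * n + 1)) (Fin (4 * n + 1)) ℂ) (j : ℤ) :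
    Matrix (Fin 2) (Fin 1) ℂ :=
  Matrix.of fun a _ => ent n Y (pstart j + (a.val : ℤ)) 0

/-- Membership in `pso(2n+1|2n)`: `Y₀₀ = 0` and the block conditions
`I Y_{−i,−j} + Y_{−j,−i}ᵀ I = 0`, `J Y_{ij} + Y_{ji}ᵀ J = 0`, `I Y_{−i,j} + Y_{j,−i}ᵀ J = 0`
for `i, j ∈ [1,n]`, and `Y_{0,−j} + Y_{−j,0}ᵀ I = 0`, `Y_{0,j} − Y_{j,0}ᵀ J = 0`
for `j ∈ [0,n]` (the case `j = 0` being the condition `Y₀₀ = 0`). -/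
def psoMem (n : ℕ) (Y : Matrix (Fin (4 * n + 1)) (Fin (4 * n + 1)) ℂ) : Prop :=
  ent n Y 0 0 = 0 ∧
  (∀ i j : ℤ, 1 ≤ i → i ≤ n → 1 ≤ j → j ≤ n →
    IM * blk n Y (-i) (-j) + (blk n Y (-j) (-i))ᵀ * IM = 0 ∧
    JM * blk n Y i j + (blk n Y j i)ᵀ * JM = 0 ∧
    IM * blk n Y (-i) j + (blk n Y j (-i))ᵀ * JM = 0) ∧
  (∀ j : ℤ, 1 ≤ j → j ≤ n →
    blkRow n Y (-j) + (blkCol n Y (-j))ᵀ * IM = 0 ∧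
    blkRow n Y j - (blkCol n Y j)ᵀ * JM = 0)

/-- Block index of a position. -/
def blockIdx (p : ℤ) : ℤ :=
  if 0 < p then (p + 1) / 2 else if p < 0 then (p - 1) / 2 else 0

/-- `Z₂×Z₂`-degree of a block pair. -/
def blkdeg (i j : ℤ) : ZMod 2 × ZMod 2 :=
  if (0 < i ∧ 0 < j) ∨ (i < 0 ∧ j < 0) then (0, 0)
  else if (i = 0 ∧ j < 0) ∨ (i < 0 ∧ j = 0) then (1, 1)
  else if (i = 0 ∧ 0 < j) ∨ (0 < i ∧ j = 0) then (1, 0)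
  else if (0 < i ∧ j < 0) ∨ (i < 0 ∧ 0 < j) then (0, 1)
  else (0, 0)

/-- Homogeneity of degree `d`. -/
def homog (n : ℕ) (d : ZMod 2 × ZMod 2)
    (x : Matrix (Fin (4 * n + 1)) (Fin (4 * n + 1)) ℂ) : Prop :=
  ∀ a b : Fin (4 * n + 1),
    blkdeg (blockIdx ((a.val : ℤ) - 2 * n)) (blockIdx ((b.val : ℤ) - 2 * n)) ≠ d →
    x a b = 0

/-- The sign `(−1)^{a·b}`. -/
def sgn (a b : ZMod 2 × ZMod 2) : ℂ :=
  if a.1 * b.1 + a.2 * b.2 = 0 then 1 else -1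

/-- The graded bracket. -/
def gbr (n : ℕ) (a b : ZMod 2 × ZMod 2)
    (x y : Matrix (Fin (4 * n + 1)) (Fin (4 * n + 1)) ℂ) :
    Matrix (Fin (4 * n + 1)) (Fin (4 * n + 1)) ℂ :=
  x * y - sgn a b • (y * x)

namespace T
def tauZ (p : ℤ) : ℤ :=
  if p = 0 then 0
  else if 0 < p then (if p % 2 = 1 then p + 1 else p - 1)
  else (if p % 2 = 0 then p + 1 else p - 1)
def gZ (p : ℤ) : ℂ := if 0 < p then (if p % 2 = 1 then 1 else -1) else 1
def rhoZ (p q : ℤ) : ℂ := if (0 < p ∧ q ≠ 0) ∨ (0 < q ∧ p ≠ 0) then -1 else 1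
def sigZ (p q : ℤ) : ℂ := -(rhoZ p q) * gZ p * gZ q
def degZ (p q : ℤ) : ZMod 2 × ZMod 2 := blkdeg (blockIdx p) (blockIdx q)

lemma tau_tau (p : ℤ) : tauZ (tauZ p) = p := by unfold tauZ; split_ifs <;> omega
lemma tau_pos (p : ℤ) : 0 < tauZ p ↔ 0 < p := by unfold tauZ; split_ifs <;> omega
lemma tau_neg (p : ℤ) : tauZ p < 0 ↔ p < 0 := by unfold tauZ; split_ifs <;> omega
lemma tau_zero (p : ℤ) : tauZ p = 0 ↔ p = 0 := by unfold tauZ; split_ifs <;> omega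
lemma tau_range {n : ℕ} {p : ℤ} (h1 : -(2*(n:ℤ)) ≤ p) (h2 : p ≤ 2*n) :
    -(2*(n:ℤ)) ≤ tauZ p ∧ tauZ p ≤ 2*n := by unfold tauZ; split_ifs <;> omega

lemma sig_comm (p q : ℤ) : sigZ p q = sigZ q p := by
  unfold sigZ rhoZ; split_ifs <;> first | ring1 | (exfalso; omega)
lemma sig_mul_self (p q : ℤ) : sigZ p q * sigZ p q = 1 := by
  unfold sigZ rhoZ gZ; split_ifs <;> norm_num

lemma blockIdx_pos (p : ℤ) : 0 < blockIdx p ↔ 0 < p := by unfold blockIdx; split_ifs <;> omega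
lemma blockIdx_neg (p : ℤ) : blockIdx p < 0 ↔ p < 0 := by unfold blockIdx; split_ifs <;> omega
lemma blockIdx_zero (p : ℤ) : blockIdx p = 0 ↔ p = 0 := by unfold blockIdx; split_ifs <;> omega

lemma blkdeg_congr {i i' j j' : ℤ} (h1 : 0 < i ↔ 0 < i') (h2 : i < 0 ↔ i' < 0)
    (h3 : i = 0 ↔ i' = 0) (h4 : 0 < j ↔ 0 < j') (h5 : j < 0 ↔ j' < 0)
    (h6 : j = 0 ↔ j' = 0) : blkdeg i j = blkdeg i' j' := by
  unfold blkdeg; simp only [h1, h2, h3, h4, h5, h6]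

lemma degZ_eq (p q : ℤ) : degZ p q = blkdeg p q :=
  blkdeg_congr (blockIdx_pos p) (blockIdx_neg p) (blockIdx_zero p)
    (blockIdx_pos q) (blockIdx_neg q) (blockIdx_zero q)

lemma degZ_tau_left (p q : ℤ) : degZ (tauZ p) q = degZ p q := by
  unfold degZ
  exact blkdeg_congr ((blockIdx_pos _).trans ((tau_pos p).trans (blockIdx_pos p).symm))
    ((blockIdx_neg _).trans ((tau_neg p).trans (blockIdx_neg p).symm))
    ((blockIdx_zero _).trans ((tau_zero p).trans (blockIdx_zero p).symm))
    Iff.rfl Iff.rfl Iff.rfl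

lemma sgn_comm (a b : ZMod 2 × ZMod 2) : sgn a b = sgn b a := by
  unfold sgn; rw [mul_comm a.1 b.1, mul_comm a.2 b.2]
lemma sgn_sq (a b : ZMod 2 × ZMod 2) : sgn a b * sgn a b = 1 := by
  unfold sgn; split_ifs <;> norm_num

lemma rho_m (p q : ℤ) (h : (0 < p ∧ q ≠ 0) ∨ (0 < q ∧ p ≠ 0)) : rhoZ p q = -1 := if_pos h
lemma rho_o (p q : ℤ) (h : ¬((0 < p ∧ q ≠ 0) ∨ (0 < q ∧ p ≠ 0))) : rhoZ p q = 1 := if_neg h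

lemma bd_pp {i j : ℤ} (h : 0 < i) (h' : 0 < j) : blkdeg i j = (0,0) := by
  unfold blkdeg; rw [if_pos (Or.inl ⟨h, h'⟩)]
lemma bd_nn {i j : ℤ} (h : i < 0) (h' : j < 0) : blkdeg i j = (0,0) := by
  unfold blkdeg; rw [if_pos (Or.inr ⟨h, h'⟩)]
lemma bd_0n {i j : ℤ} (h : i = 0) (h' : j < 0) : blkdeg i j = (1,1) := by
  unfold blkdeg; rw [if_neg (by omega), if_pos (Or.inl ⟨h, h'⟩)]
lemma bd_n0 {i j : ℤ} (h : i < 0) (h' : j = 0) : blkdeg i j = (1,1) := by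
  unfold blkdeg; rw [if_neg (by omega), if_pos (Or.inr ⟨h, h'⟩)]
lemma bd_0p {i j : ℤ} (h : i = 0) (h' : 0 < j) : blkdeg i j = (1,0) := by
  unfold blkdeg; rw [if_neg (by omega), if_neg (by omega), if_pos (Or.inl ⟨h, h'⟩)]
lemma bd_p0 {i j : ℤ} (h : 0 < i) (h' : j = 0) : blkdeg i j = (1,0) := by
  unfold blkdeg; rw [if_neg (by omega), if_neg (by omega), if_pos (Or.inr ⟨h, h'⟩)]
lemma bd_pn {i j : ℤ} (h : 0 < i) (h' : j < 0) : blkdeg i j = (0,1) := by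
  unfold blkdeg; rw [if_neg (by omega), if_neg (by omega), if_neg (by omega),
    if_pos (Or.inl ⟨h, h'⟩)]
lemma bd_np {i j : ℤ} (h : i < 0) (h' : 0 < j) : blkdeg i j = (0,1) := by
  unfold blkdeg; rw [if_neg (by omega), if_neg (by omega), if_neg (by omega),
    if_pos (Or.inr ⟨h, h'⟩)]
lemma bd_00 {i j : ℤ} (h : i = 0) (h' : j = 0) : blkdeg i j = (0,0) := by
  unfold blkdeg
  rw [if_neg (by omega), if_neg (by omega), if_neg (by omega), if_neg (by omega)]

lemma hs_p {s : ℤ} (h : 0 < s) : (if 0 < s then (-1:ℂ) else 1) = -1 := if_pos h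
lemma hs_n {s : ℤ} (h : ¬ 0 < s) : (if 0 < s then (-1:ℂ) else 1) = 1 := if_neg h

lemma sge1 (u : ZMod 2 × ZMod 2) : sgn (0,0) u = 1 := by simp [sgn]
lemma sge2 (u : ZMod 2 × ZMod 2) : sgn u (0,0) = 1 := by simp [sgn]
lemma sge3 : sgn (1,1) (1,1) = 1 := by
  unfold sgn; first | rw [if_pos (by decide)] | rw [if_neg (by decide)]
lemma sge4 : sgn (1,1) (1,0) = -1 := by
  unfold sgn; first | rw [if_pos (by decide)] | rw [if_neg (by decide)]
lemma sge5 : sgn (1,1) (0,1) = -1 := by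
  unfold sgn; first | rw [if_pos (by decide)] | rw [if_neg (by decide)]
lemma sge6 : sgn (1,0) (1,1) = -1 := by
  unfold sgn; first | rw [if_pos (by decide)] | rw [if_neg (by decide)]
lemma sge7 : sgn (0,1) (1,1) = -1 := by
  unfold sgn; first | rw [if_pos (by decide)] | rw [if_neg (by decide)]
lemma sge8 : sgn (1,0) (1,0) = -1 := by
  unfold sgn; first | rw [if_pos (by decide)] | rw [if_neg (by decide)]
lemma sge9 : sgn (0,1) (0,1) = -1 := by
  unfold sgn; first | rw [if_pos (by decide)] | rw [if_neg (by decide)]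
lemma sge10 : sgn (1,0) (0,1) = 1 := by
  unfold sgn; first | rw [if_pos (by decide)] | rw [if_neg (by decide)]
lemma sge11 : sgn (0,1) (1,0) = 1 := by
  unfold sgn; first | rw [if_pos (by decide)] | rw [if_neg (by decide)]

lemma region_id (p s q : ℤ) :
    rhoZ s q * rhoZ p s * (if 0 < s then (-1:ℂ) else 1) =
    rhoZ p q * sgn (blkdeg s q) (blkdeg p s) := by
  rcases lt_trichotomy p 0 with hp|hp|hp <;> rcases lt_trichotomy s 0 with hs|hs|hs <;>
    rcases lt_trichotomy q 0 with hq|hq|hq <;>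
    simp (disch := omega) only [rho_m, rho_o, bd_pp, bd_nn, bd_0n, bd_n0, bd_0p, bd_p0,
      bd_pn, bd_np, bd_00, hs_p, hs_n, sge1, sge2, sge3, sge4, sge5, sge6, sge7, sge8,
      sge9, sge10, sge11] <;>
    norm_num

lemma g_tau_g (s : ℤ) : gZ (tauZ s) * gZ s = if 0 < s then (-1:ℂ) else 1 := by
  rcases lt_trichotomy s 0 with hs|hs|hs
  · have h1 : ¬ 0 < tauZ s := by rw [tau_pos]; omega
    rw [hs_n (by omega)]; unfold gZ; rw [if_neg h1, if_neg (by omega)]; norm_num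
  · subst hs
    rw [hs_n (by omega)]
    have : tauZ 0 = 0 := by unfold tauZ; simp
    rw [this]; unfold gZ; norm_num
  · have h1 : 0 < tauZ s := (tau_pos s).mpr hs
    have h2 : tauZ s % 2 = 1 - s % 2 := by unfold tauZ; split_ifs <;> omega
    rw [hs_p hs]; unfold gZ
    rw [if_pos h1, if_pos hs, h2]
    rcases (by omega : s % 2 = 0 ∨ s % 2 = 1) with h|h <;>
      rw [h] <;> norm_num

lemma rho_tau_left (s q : ℤ) : rhoZ (tauZ s) q = rhoZ s q := by
  unfold rhoZ
  simp only [ne_eq, tau_pos, tau_zero]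

lemma key_sign (p s q : ℤ) (u v : ZMod 2 × ZMod 2)
    (ha : degZ s q = u) (hb : degZ p s = v) :
    sigZ (tauZ s) q * sigZ p s = -(sigZ p q) * sgn u v := by
  subst ha hb
  rw [degZ_eq, degZ_eq]
  unfold sigZ
  rw [rho_tau_left]
  have hg := g_tau_g s
  have hr := region_id p s q
  linear_combination (gZ p * gZ q) * hr +
    (rhoZ s q * rhoZ p s * gZ p * gZ q) * hg

variable {n : ℕ}

lemma finOf_val {n : ℕ} {p : ℤ} (h1 : -(2*(n:ℤ)) ≤ p) (h2 : p ≤ 2*n) :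
    ((finOf n p : Fin (4*n+1)) : ℤ) = p + 2*n := by
  unfold finOf
  have h : (p + 2*n).toNat < 4*n+1 := by omega
  simp only [Nat.mod_eq_of_lt h]
  omega

lemma finOf_z (P : Fin (4*n+1)) : finOf n (((P:ℕ) : ℤ) - 2*n) = P := by
  have hP := P.isLt
  apply Fin.ext
  show ((((P:ℕ):ℤ) - 2*n) + 2*n).toNat % (4*n+1) = (P:ℕ)
  have h : ((((P:ℕ):ℤ) - 2*n) + 2*n).toNat = (P:ℕ) := by omega
  rw [h, Nat.mod_eq_of_lt hP]

lemma deg_of_ne {d : ZMod 2 × ZMod 2} {x : Matrix (Fin (4*n+1)) (Fin (4*n+1)) ℂ}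
    (hx : homog n d x) {s q : ℤ} (hs1 : -(2*(n:ℤ)) ≤ s) (hs2 : s ≤ 2*n)
    (hq1 : -(2*(n:ℤ)) ≤ q) (hq2 : q ≤ 2*n)
    (h : x (finOf n s) (finOf n q) ≠ 0) : degZ s q = d := by
  by_contra hc
  refine h (hx _ _ ?_)
  have e1 : ((finOf n s : Fin (4*n+1)).val : ℤ) - 2*n = s := by
    have := finOf_val hs1 hs2; omega
  have e2 : ((finOf n q : Fin (4*n+1)).val : ℤ) - 2*n = q := by
    have := finOf_val hq1 hq2; omega
  rw [e1, e2]
  exact hc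

def Rc (n : ℕ) (Y : Matrix (Fin (4*n+1)) (Fin (4*n+1)) ℂ) : Prop :=
  ∀ p q : ℤ, -(2*(n:ℤ)) ≤ p → p ≤ 2*n → -(2*(n:ℤ)) ≤ q → q ≤ 2*n →
    ent n Y (tauZ q) p = sigZ p q * ent n Y (tauZ p) q



lemma pstart_neg {i : ℤ} (h : 1 ≤ i) : pstart (-i) = -(2*i) := by
  unfold pstart; rw [if_neg (by omega)]; ring
lemma pstart_pos {i : ℤ} (h : 1 ≤ i) : pstart i = 2*i - 1 := if_pos (by omega)

lemma tau_m0 {j : ℤ} (h : 1 ≤ j) : tauZ (-(2*j)) = -(2*j)+1 := by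
  unfold tauZ; split_ifs <;> omega
lemma tau_m1 {j : ℤ} (h : 1 ≤ j) : tauZ (-(2*j)+1) = -(2*j) := by
  unfold tauZ; split_ifs <;> omega
lemma tau_p0 {j : ℤ} (h : 1 ≤ j) : tauZ (2*j-1) = 2*j := by
  unfold tauZ; split_ifs <;> omega
lemma tau_p1 {j : ℤ} (h : 1 ≤ j) : tauZ (2*j) = 2*j-1 := by
  unfold tauZ; split_ifs <;> omega
lemma tau_z : tauZ 0 = 0 := by unfold tauZ; simp

lemma g_odd {i : ℤ} (h : 1 ≤ i) : gZ (2*i-1) = 1 := by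
  unfold gZ; rw [if_pos (by omega), if_pos (by omega)]
lemma g_even {i : ℤ} (h : 1 ≤ i) : gZ (2*i) = -1 := by
  unfold gZ; rw [if_pos (by omega), if_neg (by omega)]

lemma sig_nn {p q : ℤ} (hp : p < 0) (hq : q < 0) : sigZ p q = -1 := by
  unfold sigZ rhoZ gZ
  rw [if_neg (by omega), if_neg (by omega), if_neg (by omega)]; ring
lemma sig_n0 {p : ℤ} (hp : p < 0) : sigZ p 0 = -1 := by
  unfold sigZ rhoZ gZ
  rw [if_neg (by omega), if_neg (by omega), if_neg (by omega)]; ring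
lemma sig_0n {q : ℤ} (hq : q < 0) : sigZ 0 q = -1 := by
  unfold sigZ rhoZ gZ
  rw [if_neg (by omega), if_neg (by omega), if_neg (by omega)]; ring
lemma sig_00 : sigZ 0 0 = -1 := by
  unfold sigZ rhoZ gZ
  rw [if_neg (by omega), if_neg (by omega)]; ring
lemma sig_pp {p q : ℤ} (hp : 0 < p) (hq : 0 < q) : sigZ p q = gZ p * gZ q := by
  unfold sigZ rhoZ; rw [if_pos (Or.inl ⟨hp, by omega⟩)]; ring
lemma sig_np {p q : ℤ} (hp : p < 0) (hq : 0 < q) : sigZ p q = gZ q := by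
  unfold sigZ rhoZ
  rw [if_pos (Or.inr ⟨hq, by omega⟩)]
  unfold gZ; rw [if_neg (by omega)]; ring
lemma sig_pn {p q : ℤ} (hp : 0 < p) (hq : q < 0) : sigZ p q = gZ p := by
  unfold sigZ rhoZ
  rw [if_pos (Or.inl ⟨hp, by omega⟩)]
  unfold gZ; rw [if_neg (by omega : ¬ (0:ℤ) < q)]; ring
lemma sig_0p {q : ℤ} (hq : 0 < q) : sigZ 0 q = -gZ q := by
  unfold sigZ rhoZ
  rw [if_neg (by omega)]
  unfold gZ; rw [if_neg (by omega : ¬ (0:ℤ) < 0)]; ring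
lemma sig_p0 {p : ℤ} (hp : 0 < p) : sigZ p 0 = -gZ p := by
  unfold sigZ rhoZ
  rw [if_neg (by omega)]
  unfold gZ; rw [if_neg (by omega : ¬ (0:ℤ) < 0)]; ring

def R1 (n : ℕ) (Y : Matrix (Fin (4*n+1)) (Fin (4*n+1)) ℂ) (p q : ℤ) : Prop :=
  ent n Y (tauZ q) p = sigZ p q * ent n Y (tauZ p) q

lemma R1_symm {n : ℕ} {Y : Matrix (Fin (4*n+1)) (Fin (4*n+1)) ℂ} {p q : ℤ}
    (h : R1 n Y p q) : R1 n Y q p := by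
  unfold R1 at h ⊢
  rw [h, ← mul_assoc, sig_comm q p, sig_mul_self, one_mul]

lemma kind1_iff {n : ℕ} {Y : Matrix (Fin (4*n+1)) (Fin (4*n+1)) ℂ} {i j : ℤ}
    (hi : 1 ≤ i) (hj : 1 ≤ j) :
    IM * blk n Y (-i) (-j) + (blk n Y (-j) (-i))ᵀ * IM = 0 ↔
    (ent n Y (-(2*i)+1) (-(2*j)) + ent n Y (-(2*j)+1) (-(2*i)) = 0) ∧
    (ent n Y (-(2*i)+1) (-(2*j)+1) + ent n Y (-(2*j)) (-(2*i)) = 0) ∧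
    (ent n Y (-(2*i)) (-(2*j)) + ent n Y (-(2*j)+1) (-(2*i)+1) = 0) ∧
    (ent n Y (-(2*i)) (-(2*j)+1) + ent n Y (-(2*j)) (-(2*i)+1) = 0) := by
  rw [← Matrix.ext_iff]
  constructor
  · intro h
    refine ⟨?_, ?_, ?_, ?_⟩
    · have h2 := h 0 0
      simp [IM, blk, Matrix.mul_apply, Fin.sum_univ_two, Matrix.add_apply,
        Matrix.transpose_apply, Matrix.vecHead, Matrix.vecTail, pstart_neg hi,
        pstart_neg hj] at h2
      linear_combination h2
    · have h2 := h 0 1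
      simp [IM, blk, Matrix.mul_apply, Fin.sum_univ_two, Matrix.add_apply,
        Matrix.transpose_apply, Matrix.vecHead, Matrix.vecTail, pstart_neg hi,
        pstart_neg hj] at h2
      linear_combination h2
    · have h2 := h 1 0
      simp [IM, blk, Matrix.mul_apply, Fin.sum_univ_two, Matrix.add_apply,
        Matrix.transpose_apply, Matrix.vecHead, Matrix.vecTail, pstart_neg hi,
        pstart_neg hj] at h2
      linear_combination h2
    · have h2 := h 1 1
      simp [IM, blk, Matrix.mul_apply, Fin.sum_univ_two, Matrix.add_apply,
        Matrix.transpose_apply, Matrix.vecHead, Matrix.vecTail, pstart_neg hi,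
        pstart_neg hj] at h2
      linear_combination h2
  · rintro ⟨h1, h2, h3, h4⟩ α β
    fin_cases α <;> fin_cases β <;>
      simp [IM, blk, Matrix.mul_apply, Fin.sum_univ_two, Matrix.add_apply,
        Matrix.transpose_apply, Matrix.vecHead, Matrix.vecTail, pstart_neg hi,
        pstart_neg hj] <;>
      first | linear_combination h1 | linear_combination h2 | linear_combination h3 |
        linear_combination h4 | linear_combination -h1 | linear_combination -h2 |
        linear_combination -h3 | linear_combination -h4

lemma kind2_iff {n : ℕ} {Y : Matrix (Fin (4*n+1)) (Fin (4*n+1)) ℂ} {i j : ℤ}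
    (hi : 1 ≤ i) (hj : 1 ≤ j) :
    JM * blk n Y i j + (blk n Y j i)ᵀ * JM = 0 ↔
    (ent n Y (2*i) (2*j-1) - ent n Y (2*j) (2*i-1) = 0) ∧
    (ent n Y (2*i) (2*j) + ent n Y (2*j-1) (2*i-1) = 0) ∧
    (ent n Y (2*i-1) (2*j-1) + ent n Y (2*j) (2*i) = 0) ∧
    (ent n Y (2*i-1) (2*j) - ent n Y (2*j-1) (2*i) = 0) := by
  rw [← Matrix.ext_iff]
  constructor
  · intro h
    refine ⟨?_, ?_, ?_, ?_⟩
    · have h2 := h 0 0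
      simp [IM, JM, blk, blkRow, blkCol, Matrix.mul_apply, Fin.sum_univ_two, Matrix.add_apply, Matrix.sub_apply,
        Matrix.transpose_apply, Matrix.vecHead, Matrix.vecTail, pstart_neg hi,
        pstart_neg hj, pstart_pos hi, pstart_pos hj] at h2
      first | linear_combination h2 | linear_combination -h2
    · have h2 := h 0 1
      simp [IM, JM, blk, blkRow, blkCol, Matrix.mul_apply, Fin.sum_univ_two, Matrix.add_apply, Matrix.sub_apply,
        Matrix.transpose_apply, Matrix.vecHead, Matrix.vecTail, pstart_neg hi,
        pstart_neg hj, pstart_pos hi, pstart_pos hj] at h2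
      first | linear_combination h2 | linear_combination -h2
    · have h2 := h 1 0
      simp [IM, JM, blk, blkRow, blkCol, Matrix.mul_apply, Fin.sum_univ_two, Matrix.add_apply, Matrix.sub_apply,
        Matrix.transpose_apply, Matrix.vecHead, Matrix.vecTail, pstart_neg hi,
        pstart_neg hj, pstart_pos hi, pstart_pos hj] at h2
      first | linear_combination h2 | linear_combination -h2
    · have h2 := h 1 1
      simp [IM, JM, blk, blkRow, blkCol, Matrix.mul_apply, Fin.sum_univ_two, Matrix.add_apply, Matrix.sub_apply,
        Matrix.transpose_apply, Matrix.vecHead, Matrix.vecTail, pstart_neg hi,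
        pstart_neg hj, pstart_pos hi, pstart_pos hj] at h2
      first | linear_combination h2 | linear_combination -h2
  · rintro ⟨h1, h2, h3, h4⟩ α β
    fin_cases α <;> fin_cases β <;>
      simp [IM, JM, blk, blkRow, blkCol, Matrix.mul_apply, Fin.sum_univ_two, Matrix.add_apply, Matrix.sub_apply,
        Matrix.transpose_apply, Matrix.vecHead, Matrix.vecTail, pstart_neg hi,
        pstart_neg hj, pstart_pos hi, pstart_pos hj] <;>
      first | linear_combination h1 | linear_combination h2 | linear_combination h3 |
        linear_combination h4 | linear_combination -h1 | linear_combination -h2 |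
        linear_combination -h3 | linear_combination -h4

lemma kind3_iff {n : ℕ} {Y : Matrix (Fin (4*n+1)) (Fin (4*n+1)) ℂ} {i j : ℤ}
    (hi : 1 ≤ i) (hj : 1 ≤ j) :
    IM * blk n Y (-i) j + (blk n Y j (-i))ᵀ * JM = 0 ↔
    (ent n Y (-(2*i)+1) (2*j-1) - ent n Y (2*j) (-(2*i)) = 0) ∧
    (ent n Y (-(2*i)+1) (2*j) + ent n Y (2*j-1) (-(2*i)) = 0) ∧
    (ent n Y (-(2*i)) (2*j-1) - ent n Y (2*j) (-(2*i)+1) = 0) ∧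
    (ent n Y (-(2*i)) (2*j) + ent n Y (2*j-1) (-(2*i)+1) = 0) := by
  rw [← Matrix.ext_iff]
  constructor
  · intro h
    refine ⟨?_, ?_, ?_, ?_⟩
    · have h2 := h 0 0
      simp [IM, JM, blk, blkRow, blkCol, Matrix.mul_apply, Fin.sum_univ_two, Matrix.add_apply, Matrix.sub_apply,
        Matrix.transpose_apply, Matrix.vecHead, Matrix.vecTail, pstart_neg hi,
        pstart_neg hj, pstart_pos hi, pstart_pos hj] at h2
      first | linear_combination h2 | linear_combination -h2
    · have h2 := h 0 1
      simp [IM, JM, blk, blkRow, blkCol, Matrix.mul_apply, Fin.sum_univ_two, Matrix.add_apply, Matrix.sub_apply,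
        Matrix.transpose_apply, Matrix.vecHead, Matrix.vecTail, pstart_neg hi,
        pstart_neg hj, pstart_pos hi, pstart_pos hj] at h2
      first | linear_combination h2 | linear_combination -h2
    · have h2 := h 1 0
      simp [IM, JM, blk, blkRow, blkCol, Matrix.mul_apply, Fin.sum_univ_two, Matrix.add_apply, Matrix.sub_apply,
        Matrix.transpose_apply, Matrix.vecHead, Matrix.vecTail, pstart_neg hi,
        pstart_neg hj, pstart_pos hi, pstart_pos hj] at h2
      first | linear_combination h2 | linear_combination -h2
    · have h2 := h 1 1
      simp [IM, JM, blk, blkRow, blkCol, Matrix.mul_apply, Fin.sum_univ_two, Matrix.add_apply, Matrix.sub_apply,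
        Matrix.transpose_apply, Matrix.vecHead, Matrix.vecTail, pstart_neg hi,
        pstart_neg hj, pstart_pos hi, pstart_pos hj] at h2
      first | linear_combination h2 | linear_combination -h2
  · rintro ⟨h1, h2, h3, h4⟩ α β
    fin_cases α <;> fin_cases β <;>
      simp [IM, JM, blk, blkRow, blkCol, Matrix.mul_apply, Fin.sum_univ_two, Matrix.add_apply, Matrix.sub_apply,
        Matrix.transpose_apply, Matrix.vecHead, Matrix.vecTail, pstart_neg hi,
        pstart_neg hj, pstart_pos hi, pstart_pos hj] <;>
      first | linear_combination h1 | linear_combination h2 | linear_combination h3 |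
        linear_combination h4 | linear_combination -h1 | linear_combination -h2 |
        linear_combination -h3 | linear_combination -h4

lemma kind4_iff {n : ℕ} {Y : Matrix (Fin (4*n+1)) (Fin (4*n+1)) ℂ} {j : ℤ}
    (hj : 1 ≤ j) :
    blkRow n Y (-j) + (blkCol n Y (-j))ᵀ * IM = 0 ↔
    (ent n Y 0 (-(2*j)) + ent n Y (-(2*j)+1) 0 = 0) ∧
    (ent n Y 0 (-(2*j)+1) + ent n Y (-(2*j)) 0 = 0) := by
  rw [← Matrix.ext_iff]
  constructor
  · intro h
    refine ⟨?_, ?_⟩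
    · have h2 := h 0 0
      simp [IM, JM, blk, blkRow, blkCol, Matrix.mul_apply, Fin.sum_univ_two, Matrix.add_apply, Matrix.sub_apply,
        Matrix.transpose_apply, Matrix.vecHead, Matrix.vecTail,
        pstart_neg hj, pstart_pos hj] at h2
      first | linear_combination h2 | linear_combination -h2
    · have h2 := h 0 1
      simp [IM, JM, blk, blkRow, blkCol, Matrix.mul_apply, Fin.sum_univ_two, Matrix.add_apply, Matrix.sub_apply,
        Matrix.transpose_apply, Matrix.vecHead, Matrix.vecTail,
        pstart_neg hj, pstart_pos hj] at h2
      first | linear_combination h2 | linear_combination -h2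
  · rintro ⟨h1, h2⟩ α β
    fin_cases α <;> fin_cases β <;>
      simp [IM, JM, blk, blkRow, blkCol, Matrix.mul_apply, Fin.sum_univ_two, Matrix.add_apply, Matrix.sub_apply,
        Matrix.transpose_apply, Matrix.vecHead, Matrix.vecTail,
        pstart_neg hj, pstart_pos hj] <;>
      first | linear_combination h1 | linear_combination h2 | linear_combination -h1 |
        linear_combination -h2

lemma kind5_iff {n : ℕ} {Y : Matrix (Fin (4*n+1)) (Fin (4*n+1)) ℂ} {j : ℤ}
    (hj : 1 ≤ j) :
    blkRow n Y j - (blkCol n Y j)ᵀ * JM = 0 ↔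
    (ent n Y 0 (2*j-1) + ent n Y (2*j) 0 = 0) ∧
    (ent n Y 0 (2*j) - ent n Y (2*j-1) 0 = 0) := by
  rw [← Matrix.ext_iff]
  constructor
  · intro h
    refine ⟨?_, ?_⟩
    · have h2 := h 0 0
      simp [IM, JM, blk, blkRow, blkCol, Matrix.mul_apply, Fin.sum_univ_two, Matrix.add_apply, Matrix.sub_apply,
        Matrix.transpose_apply, Matrix.vecHead, Matrix.vecTail,
        pstart_neg hj, pstart_pos hj] at h2
      first | linear_combination h2 | linear_combination -h2
    · have h2 := h 0 1
      simp [IM, JM, blk, blkRow, blkCol, Matrix.mul_apply, Fin.sum_univ_two, Matrix.add_apply, Matrix.sub_apply,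
        Matrix.transpose_apply, Matrix.vecHead, Matrix.vecTail,
        pstart_neg hj, pstart_pos hj] at h2
      first | linear_combination h2 | linear_combination -h2
  · rintro ⟨h1, h2⟩ α β
    fin_cases α <;> fin_cases β <;>
      simp [IM, JM, blk, blkRow, blkCol, Matrix.mul_apply, Fin.sum_univ_two, Matrix.add_apply, Matrix.sub_apply,
        Matrix.transpose_apply, Matrix.vecHead, Matrix.vecTail,
        pstart_neg hj, pstart_pos hj] <;>
      first | linear_combination h1 | linear_combination h2 | linear_combination -h1 |
        linear_combination -h2


lemma psoMem_to_Rc {n : ℕ} {Y : Matrix (Fin (4*n+1)) (Fin (4*n+1)) ℂ}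
    (h : psoMem n Y) : Rc n Y := by
  obtain ⟨h0, hB, hRow⟩ := h
  have main : ∀ p q : ℤ, -(2*(n:ℤ)) ≤ p → p ≤ 2*n → -(2*(n:ℤ)) ≤ q → q ≤ 2*n →
      ((p < 0 ∧ q < 0) ∨ (0 < p ∧ 0 < q) ∨ (p < 0 ∧ 0 < q) ∨ p = 0) → R1 n Y p q := by
    intro p q hp1 hp2 hq1 hq2 hcase
    unfold R1
    rcases hcase with ⟨hp, hq⟩ | ⟨hp, hq⟩ | ⟨hp, hq⟩ | hp
    · obtain ⟨i, hi1, hin, hpe⟩ : ∃ i : ℤ, 1 ≤ i ∧ i ≤ (n:ℤ) ∧ (p = -(2*i) ∨ p = -(2*i)+1) :=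
        ⟨(1-p)/2, by omega, by omega, by omega⟩
      obtain ⟨j, hj1, hjn, hqe⟩ : ∃ j : ℤ, 1 ≤ j ∧ j ≤ (n:ℤ) ∧ (q = -(2*j) ∨ q = -(2*j)+1) :=
        ⟨(1-q)/2, by omega, by omega, by omega⟩
      obtain ⟨c1, c2, c3, c4⟩ := (kind1_iff hi1 hj1).mp (hB i j hi1 hin hj1 hjn).1
      rcases hpe with hpe|hpe <;> rcases hqe with hqe|hqe
      · subst hpe; subst hqe
        rw [tau_m0 hj1, tau_m0 hi1, sig_nn (by omega) (by omega)]; linear_combination c1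
      · subst hpe; subst hqe
        rw [tau_m1 hj1, tau_m0 hi1, sig_nn (by omega) (by omega)]; linear_combination c2
      · subst hpe; subst hqe
        rw [tau_m0 hj1, tau_m1 hi1, sig_nn (by omega) (by omega)]; linear_combination c3
      · subst hpe; subst hqe
        rw [tau_m1 hj1, tau_m1 hi1, sig_nn (by omega) (by omega)]; linear_combination c4
    · obtain ⟨i, hi1, hin, hpe⟩ : ∃ i : ℤ, 1 ≤ i ∧ i ≤ (n:ℤ) ∧ (p = 2*i-1 ∨ p = 2*i) :=
        ⟨(p+1)/2, by omega, by omega, by omega⟩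
      obtain ⟨j, hj1, hjn, hqe⟩ : ∃ j : ℤ, 1 ≤ j ∧ j ≤ (n:ℤ) ∧ (q = 2*j-1 ∨ q = 2*j) :=
        ⟨(q+1)/2, by omega, by omega, by omega⟩
      obtain ⟨c1, c2, c3, c4⟩ := (kind2_iff hi1 hj1).mp (hB i j hi1 hin hj1 hjn).2.1
      rcases hpe with hpe|hpe <;> rcases hqe with hqe|hqe
      · subst hpe; subst hqe
        rw [tau_p0 hj1, tau_p0 hi1, sig_pp (by omega) (by omega), g_odd hi1, g_odd hj1]
        linear_combination -c1
      · subst hpe; subst hqe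
        rw [tau_p1 hj1, tau_p0 hi1, sig_pp (by omega) (by omega), g_odd hi1, g_even hj1]
        linear_combination c2
      · subst hpe; subst hqe
        rw [tau_p0 hj1, tau_p1 hi1, sig_pp (by omega) (by omega), g_even hi1, g_odd hj1]
        linear_combination c3
      · subst hpe; subst hqe
        rw [tau_p1 hj1, tau_p1 hi1, sig_pp (by omega) (by omega), g_even hi1, g_even hj1]
        linear_combination -c4
    · obtain ⟨i, hi1, hin, hpe⟩ : ∃ i : ℤ, 1 ≤ i ∧ i ≤ (n:ℤ) ∧ (p = -(2*i) ∨ p = -(2*i)+1) :=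
        ⟨(1-p)/2, by omega, by omega, by omega⟩
      obtain ⟨j, hj1, hjn, hqe⟩ : ∃ j : ℤ, 1 ≤ j ∧ j ≤ (n:ℤ) ∧ (q = 2*j-1 ∨ q = 2*j) :=
        ⟨(q+1)/2, by omega, by omega, by omega⟩
      obtain ⟨c1, c2, c3, c4⟩ := (kind3_iff hi1 hj1).mp (hB i j hi1 hin hj1 hjn).2.2
      rcases hpe with hpe|hpe <;> rcases hqe with hqe|hqe
      · subst hpe; subst hqe
        rw [tau_p0 hj1, tau_m0 hi1, sig_np (by omega) (by omega), g_odd hj1]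
        linear_combination -c1
      · subst hpe; subst hqe
        rw [tau_p1 hj1, tau_m0 hi1, sig_np (by omega) (by omega), g_even hj1]
        linear_combination c2
      · subst hpe; subst hqe
        rw [tau_p0 hj1, tau_m1 hi1, sig_np (by omega) (by omega), g_odd hj1]
        linear_combination -c3
      · subst hpe; subst hqe
        rw [tau_p1 hj1, tau_m1 hi1, sig_np (by omega) (by omega), g_even hj1]
        linear_combination c4
    · subst hp
      rcases lt_trichotomy q 0 with hq|hq|hq
      · obtain ⟨j, hj1, hjn, hqe⟩ : ∃ j : ℤ, 1 ≤ j ∧ j ≤ (n:ℤ) ∧ (q = -(2*j) ∨ q = -(2*j)+1) :=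
          ⟨(1-q)/2, by omega, by omega, by omega⟩
        obtain ⟨c1, c2⟩ := (kind4_iff hj1).mp (hRow j hj1 hjn).1
        rcases hqe with hqe|hqe
        · subst hqe
          rw [tau_m0 hj1, tau_z, sig_0n (by omega)]; linear_combination c1
        · subst hqe
          rw [tau_m1 hj1, tau_z, sig_0n (by omega)]; linear_combination c2
      · subst hq
        rw [tau_z, sig_00]; linear_combination 2 * h0
      · obtain ⟨j, hj1, hjn, hqe⟩ : ∃ j : ℤ, 1 ≤ j ∧ j ≤ (n:ℤ) ∧ (q = 2*j-1 ∨ q = 2*j) :=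
          ⟨(q+1)/2, by omega, by omega, by omega⟩
        obtain ⟨c1, c2⟩ := (kind5_iff hj1).mp (hRow j hj1 hjn).2
        rcases hqe with hqe|hqe
        · subst hqe
          rw [tau_p0 hj1, tau_z, sig_0p (by omega), g_odd hj1]; linear_combination c1
        · subst hqe
          rw [tau_p1 hj1, tau_z, sig_0p (by omega), g_even hj1]; linear_combination -c2
  intro p q hp1 hp2 hq1 hq2
  have mpq := main p q hp1 hp2 hq1 hq2
  have mqp := main q p hq1 hq2 hp1 hp2
  rcases lt_trichotomy p 0 with hp|hp|hp
  · rcases lt_trichotomy q 0 with hq|hq|hq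
    · exact mpq (Or.inl ⟨hp, hq⟩)
    · exact R1_symm (mqp (Or.inr (Or.inr (Or.inr hq))))
    · exact mpq (Or.inr (Or.inr (Or.inl ⟨hp, hq⟩)))
  · exact mpq (Or.inr (Or.inr (Or.inr hp)))
  · rcases lt_trichotomy q 0 with hq|hq|hq
    · exact R1_symm (mqp (Or.inr (Or.inr (Or.inl ⟨hq, hp⟩))))
    · exact R1_symm (mqp (Or.inr (Or.inr (Or.inr hq))))
    · exact mpq (Or.inr (Or.inl ⟨hp, hq⟩))

lemma Rc_to_psoMem {n : ℕ} {Y : Matrix (Fin (4*n+1)) (Fin (4*n+1)) ℂ}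
    (hR : Rc n Y) : psoMem n Y := by
  have h00 := hR 0 0 (by omega) (by omega) (by omega) (by omega)
  rw [tau_z, sig_00] at h00
  refine ⟨by linear_combination h00 / 2, fun i j hi1 hin hj1 hjn => ⟨?_, ?_, ?_⟩,
    fun j hj1 hjn => ⟨?_, ?_⟩⟩
  · refine (kind1_iff hi1 hj1).mpr ⟨?_, ?_, ?_, ?_⟩
    · have h := hR (-(2*i)) (-(2*j)) (by omega) (by omega) (by omega) (by omega)
      rw [tau_m0 hj1, tau_m0 hi1, sig_nn (by omega) (by omega)] at h; linear_combination h
    · have h := hR (-(2*i)) (-(2*j)+1) (by omega) (by omega) (by omega) (by omega)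
      rw [tau_m1 hj1, tau_m0 hi1, sig_nn (by omega) (by omega)] at h; linear_combination h
    · have h := hR (-(2*i)+1) (-(2*j)) (by omega) (by omega) (by omega) (by omega)
      rw [tau_m0 hj1, tau_m1 hi1, sig_nn (by omega) (by omega)] at h; linear_combination h
    · have h := hR (-(2*i)+1) (-(2*j)+1) (by omega) (by omega) (by omega) (by omega)
      rw [tau_m1 hj1, tau_m1 hi1, sig_nn (by omega) (by omega)] at h; linear_combination h
  · refine (kind2_iff hi1 hj1).mpr ⟨?_, ?_, ?_, ?_⟩
    · have h := hR (2*i-1) (2*j-1) (by omega) (by omega) (by omega) (by omega)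
      rw [tau_p0 hj1, tau_p0 hi1, sig_pp (by omega) (by omega), g_odd hi1, g_odd hj1] at h
      linear_combination -h
    · have h := hR (2*i-1) (2*j) (by omega) (by omega) (by omega) (by omega)
      rw [tau_p1 hj1, tau_p0 hi1, sig_pp (by omega) (by omega), g_odd hi1, g_even hj1] at h
      linear_combination h
    · have h := hR (2*i) (2*j-1) (by omega) (by omega) (by omega) (by omega)
      rw [tau_p0 hj1, tau_p1 hi1, sig_pp (by omega) (by omega), g_even hi1, g_odd hj1] at h
      linear_combination h
    · have h := hR (2*i) (2*j) (by omega) (by omega) (by omega) (by omega)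
      rw [tau_p1 hj1, tau_p1 hi1, sig_pp (by omega) (by omega), g_even hi1, g_even hj1] at h
      linear_combination -h
  · refine (kind3_iff hi1 hj1).mpr ⟨?_, ?_, ?_, ?_⟩
    · have h := hR (-(2*i)) (2*j-1) (by omega) (by omega) (by omega) (by omega)
      rw [tau_p0 hj1, tau_m0 hi1, sig_np (by omega) (by omega), g_odd hj1] at h
      linear_combination -h
    · have h := hR (-(2*i)) (2*j) (by omega) (by omega) (by omega) (by omega)
      rw [tau_p1 hj1, tau_m0 hi1, sig_np (by omega) (by omega), g_even hj1] at h
      linear_combination h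
    · have h := hR (-(2*i)+1) (2*j-1) (by omega) (by omega) (by omega) (by omega)
      rw [tau_p0 hj1, tau_m1 hi1, sig_np (by omega) (by omega), g_odd hj1] at h
      linear_combination -h
    · have h := hR (-(2*i)+1) (2*j) (by omega) (by omega) (by omega) (by omega)
      rw [tau_p1 hj1, tau_m1 hi1, sig_np (by omega) (by omega), g_even hj1] at h
      linear_combination h
  · refine (kind4_iff hj1).mpr ⟨?_, ?_⟩
    · have h := hR 0 (-(2*j)) (by omega) (by omega) (by omega) (by omega)
      rw [tau_m0 hj1, tau_z, sig_0n (by omega)] at h; linear_combination h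
    · have h := hR 0 (-(2*j)+1) (by omega) (by omega) (by omega) (by omega)
      rw [tau_m1 hj1, tau_z, sig_0n (by omega)] at h; linear_combination h
  · refine (kind5_iff hj1).mpr ⟨?_, ?_⟩
    · have h := hR 0 (2*j-1) (by omega) (by omega) (by omega) (by omega)
      rw [tau_p0 hj1, tau_z, sig_0p (by omega), g_odd hj1] at h; linear_combination h
    · have h := hR 0 (2*j) (by omega) (by omega) (by omega) (by omega)
      rw [tau_p1 hj1, tau_z, sig_0p (by omega), g_even hj1] at h; linear_combination -h

lemma Rc_bracket (n : ℕ) (a b : ZMod 2 × ZMod 2)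
    (x y : Matrix (Fin (4*n+1)) (Fin (4*n+1)) ℂ)
    (hxa : homog n a x) (hyb : homog n b y) (hRx : Rc n x) (hRy : Rc n y) :
    Rc n (gbr n a b x y) := by
  intro p q hp1 hp2 hq1 hq2
  have hS : sgn a b * sgn a b = 1 := sgn_sq a b
  set S := sgn a b with hS_def
  set τF : Fin (4*n+1) → Fin (4*n+1) := fun r => finOf n (tauZ (((r:ℕ):ℤ) - 2*n)) with hτF
  have hinv : Function.Involutive τF := by
    intro r
    have hr := r.isLt
    have hrng := tau_range (n := n) (p := ((r:ℕ):ℤ) - 2*n) (by omega) (by omega)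
    show finOf n (tauZ (((finOf n (tauZ (((r:ℕ):ℤ) - 2*n)) : Fin (4*n+1)) : ℤ) - 2*n)) = r
    have hv : ((finOf n (tauZ (((r:ℕ):ℤ) - 2*n)) : Fin (4*n+1)) : ℤ) - 2*n
        = tauZ (((r:ℕ):ℤ) - 2*n) := by
      have := finOf_val hrng.1 hrng.2; omega
    rw [hv, tau_tau]
    exact finOf_z r
  have reindex : ∀ (F : Fin (4*n+1) → ℂ), ∑ r, F r = ∑ r, F (τF r) := fun F =>
    (Equiv.sum_comp (Function.Involutive.toPerm τF hinv) F).symm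
  have hτp := tau_range (n := n) (p := p) hp1 hp2
  have hτq := tau_range (n := n) (p := q) hq1 hq2
  have expand : ∀ u v : ℤ, ent n (gbr n a b x y) u v =
      ∑ r, (x (finOf n u) r * y r (finOf n v)
        - S * (y (finOf n u) r * x r (finOf n v))) := by
    intro u v
    show (x * y - S • (y * x)) (finOf n u) (finOf n v) = _
    rw [Matrix.sub_apply, Matrix.smul_apply, Matrix.mul_apply, Matrix.mul_apply,
      smul_eq_mul, Finset.mul_sum, ← Finset.sum_sub_distrib]
  rw [expand, expand, reindex, Finset.mul_sum]
  refine Finset.sum_congr rfl ?_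
  intro r _
  have hrlt := r.isLt
  set s : ℤ := ((r:ℕ):ℤ) - 2*n with hs_def
  have hs1 : -(2*(n:ℤ)) ≤ s := by omega
  have hs2 : s ≤ 2*n := by omega
  have hτs := tau_range (n := n) (p := s) hs1 hs2
  have hτFr : τF r = finOf n (tauZ s) := rfl
  have hrr : finOf n s = r := finOf_z r
  rw [hτFr, ← hrr]
  have hx1 : x (finOf n (tauZ q)) (finOf n (tauZ s))
      = sigZ (tauZ s) q * x (finOf n s) (finOf n q) := by
    have h := hRx (tauZ s) q hτs.1 hτs.2 hq1 hq2
    rw [tau_tau] at h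
    exact h
  have hy1 : y (finOf n (tauZ s)) (finOf n p)
      = sigZ p s * y (finOf n (tauZ p)) (finOf n s) := hRy p s hp1 hp2 hs1 hs2
  have hy2 : y (finOf n (tauZ q)) (finOf n (tauZ s))
      = sigZ (tauZ s) q * y (finOf n s) (finOf n q) := by
    have h := hRy (tauZ s) q hτs.1 hτs.2 hq1 hq2
    rw [tau_tau] at h
    exact h
  have hx3 : x (finOf n (tauZ s)) (finOf n p)
      = sigZ p s * x (finOf n (tauZ p)) (finOf n s) := hRx p s hp1 hp2 hs1 hs2
  rw [hx1, hy1, hy2, hx3]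
  set A := x (finOf n s) (finOf n q)
  set B := y (finOf n (tauZ p)) (finOf n s)
  set C := x (finOf n (tauZ p)) (finOf n s)
  set D := y (finOf n s) (finOf n q)
  have e1 : sigZ (tauZ s) q * A * (sigZ p s * B) = -(sigZ p q) * S * (A * B) := by
    by_cases hA : A = 0
    · rw [hA]; ring
    by_cases hB : B = 0
    · rw [hB]; ring
    have ha : degZ s q = a := deg_of_ne hxa hs1 hs2 hq1 hq2 hA
    have hb : degZ (tauZ p) s = b := deg_of_ne hyb hτp.1 hτp.2 hs1 hs2 hB
    rw [degZ_tau_left] at hb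
    have hk := key_sign p s q a b ha hb
    linear_combination (A * B) * hk
  have e2 : sigZ (tauZ s) q * D * (sigZ p s * C) = -(sigZ p q) * S * (D * C) := by
    by_cases hD : D = 0
    · rw [hD]; ring
    by_cases hC : C = 0
    · rw [hC]; ring
    have hb : degZ s q = b := deg_of_ne hyb hs1 hs2 hq1 hq2 hD
    have ha : degZ (tauZ p) s = a := deg_of_ne hxa hτp.1 hτp.2 hs1 hs2 hC
    rw [degZ_tau_left] at ha
    have hk := key_sign p s q b a hb ha
    rw [sgn_comm b a] at hk
    linear_combination (D * C) * hk
  linear_combination e1 - S * e2 + (sigZ p q * D * C) * hS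

end T

/-- `pso(2n+1|2n)` is closed under the graded bracket: for homogeneous
`x, y` of degrees `a, b` satisfying the defining block conditions, `⟦x,y⟧` again
satisfies them. -/
theorem pso_closed_under_bracket (n : ℕ) (a b : ZMod 2 × ZMod 2)
    (x y : Matrix (Fin (4 * n + 1)) (Fin (4 * n + 1)) ℂ)
    (hx : psoMem n x) (hy : psoMem n y) (hxa : homog n a x) (hyb : homog n b y) :
    psoMem n (gbr n a b x y) := by
  exact T.Rc_to_psoMem (T.Rc_bracket n a b x y hxa hyb (T.psoMem_to_Rc hx) (T.psoMem_to_Rc hy))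

end
end

section
/- The parafermion generators f̄₋ᵢ^± = √2(e_{−2i,0} − e_{0,−2i+1}) and √2(e_{0,−2i} − e_{−2i+1,0}) satisfy the parafermion triple relations [[f̄_j^ξ, f̄_k^η], f̄_l^ε] = |ε−η| δ_{kl} f̄_j^ξ − |ε−ξ| δ_{jl} f̄_k^η for all j,k,l ∈ {1,…,n} and signs ξ,η,ε ∈ {+1,−1}. -/
noncomputable section

/-- The matrix unit `e_{ij}` with rows and columns indexed by positions `−2n,…,2n`
(realized as `Fin (4n+1)` shifted by `2n`). -/
def eM (n : ℕ) (i j : ℤ) : Matrix (Fin (4 * n + 1)) (Fin (4 * n + 1)) ℂ :=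
  Matrix.of fun a b => if (a.val : ℤ) = i + 2 * n ∧ (b.val : ℤ) = j + 2 * n then 1 else 0

/-- `√2` as a complex number. -/
def sq2 : ℂ := Real.sqrt 2

/-- The parafermion generator `f̄₋ᵢ^ξ`:
`f̄₋ᵢ^+ = √2(e_{−2i,0} − e_{0,−2i+1})`, `f̄₋ᵢ^− = √2(e_{0,−2i} − e_{−2i+1,0})`. -/
def fbar (n : ℕ) (i ξ : ℤ) : Matrix (Fin (4 * n + 1)) (Fin (4 * n + 1)) ℂ :=
  if ξ = 1 then sq2 • (eM n (-2 * i) 0 - eM n 0 (-2 * i + 1))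
  else sq2 • (eM n 0 (-2 * i) - eM n (-2 * i + 1) 0)

/-- Commutator. -/
def cbr {α : Type*} [Ring α] (x y : α) : α := x * y - y * x

lemma sq2_sq : sq2 * sq2 = 2 := by
  unfold sq2
  rw [← Complex.ofReal_mul, Real.mul_self_sqrt (by norm_num)]
  norm_num

lemma eM_mul (n : ℕ) (i p q r : ℤ) (hp1 : 0 ≤ p + 2*n) (hp2 : p + 2*n ≤ 4*n) :
    eM n i p * eM n q r = if p = q then eM n i r else 0 := by
  rcases eq_or_ne p q with rfl | hpq
  · rw [if_pos rfl]
    ext a c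
    rw [Matrix.mul_apply]
    set b0 : Fin (4*n+1) := ⟨(p + 2*n).toNat, by omega⟩ with hb0def
    have hb0 : (b0.val : ℤ) = p + 2*n := by simp [hb0def]; omega
    rw [Finset.sum_eq_single b0]
    · simp only [eM, Matrix.of_apply, hb0, and_true, true_and]
      by_cases h1 : (a.val : ℤ) = i + 2*n <;> by_cases h2 : (c.val : ℤ) = r + 2*n <;>
        simp [h1, h2]
    · intro b _ hb
      have hb' : ¬((b.val : ℤ) = p + 2*n) := by
        intro h; exact hb (Fin.ext (by omega))
      simp [eM, hb']
    · simp
  · rw [if_neg hpq]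
    ext a c
    rw [Matrix.mul_apply]
    simp only [Matrix.zero_apply]
    apply Finset.sum_eq_zero
    intro b _
    by_cases h1 : (b.val : ℤ) = p + 2*n
    · have h2 : ¬((b.val : ℤ) = q + 2*n) := by omega
      simp [eM, h2]
    · simp [eM, h1]

lemma mul_zz (n : ℕ) (a b : ℤ) : eM n a 0 * eM n 0 b = eM n a b := by
  have := eM_mul n a 0 0 b (by omega) (by omega); simpa using this

lemma mul_zg (n : ℕ) (k : ℤ) (hk : 1 ≤ k) (hkn : k ≤ n) (a b : ℤ) :
    eM n a 0 * eM n ((-(2*k))) b = 0 := by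
  have := eM_mul n a 0 ((-(2*k))) b (by omega) (by omega)
  rwa [if_neg (by omega)] at this

lemma mul_zh (n : ℕ) (k : ℤ) (hk : 1 ≤ k) (hkn : k ≤ n) (a b : ℤ) :
    eM n a 0 * eM n ((-(2*k))+1) b = 0 := by
  have := eM_mul n a 0 ((-(2*k))+1) b (by omega) (by omega)
  rwa [if_neg (by omega)] at this

lemma mul_gz (n : ℕ) (j : ℤ) (hj : 1 ≤ j) (hjn : j ≤ n) (a b : ℤ) :
    eM n a ((-(2*j))) * eM n 0 b = 0 := by
  have := eM_mul n a ((-(2*j))) 0 b (by omega) (by omega)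
  rwa [if_neg (by omega)] at this

lemma mul_gg (n : ℕ) (j k : ℤ) (hj : 1 ≤ j) (hjn : j ≤ n) (a b : ℤ) :
    eM n a ((-(2*j))) * eM n ((-(2*k))) b = if j = k then eM n a b else 0 := by
  rw [eM_mul n a ((-(2*j))) ((-(2*k))) b (by omega) (by omega)]
  rcases eq_or_ne j k with rfl | h
  · simp
  · rw [if_neg (by omega), if_neg h]

lemma mul_gh (n : ℕ) (j k : ℤ) (hj : 1 ≤ j) (hjn : j ≤ n) (a b : ℤ) :
    eM n a ((-(2*j))) * eM n ((-(2*k))+1) b = 0 := by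
  have := eM_mul n a ((-(2*j))) ((-(2*k))+1) b (by omega) (by omega)
  rwa [if_neg (by omega)] at this

lemma mul_hz (n : ℕ) (j : ℤ) (hj : 1 ≤ j) (hjn : j ≤ n) (a b : ℤ) :
    eM n a ((-(2*j))+1) * eM n 0 b = 0 := by
  have := eM_mul n a ((-(2*j))+1) 0 b (by omega) (by omega)
  rwa [if_neg (by omega)] at this

lemma mul_hg (n : ℕ) (j k : ℤ) (hj : 1 ≤ j) (hjn : j ≤ n) (a b : ℤ) :
    eM n a ((-(2*j))+1) * eM n ((-(2*k))) b = 0 := by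
  have := eM_mul n a ((-(2*j))+1) ((-(2*k))) b (by omega) (by omega)
  rwa [if_neg (by omega)] at this

lemma mul_hh (n : ℕ) (j k : ℤ) (hj : 1 ≤ j) (hjn : j ≤ n) (a b : ℤ) :
    eM n a ((-(2*j))+1) * eM n ((-(2*k))+1) b = if j = k then eM n a b else 0 := by
  rw [eM_mul n a ((-(2*j))+1) ((-(2*k))+1) b (by omega) (by omega)]
  rcases eq_or_ne j k with rfl | h
  · simp
  · rw [if_neg (by omega), if_neg h]


set_option maxHeartbeats 1600000

/-- the parafermion triple relations
`[[f̄_j^ξ, f̄_k^η], f̄_l^ε] = |ε−η| δ_{kl} f̄_j^ξ − |ε−ξ| δ_{jl} f̄_k^η`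
for `j,k,l ∈ {1,…,n}` and `ξ,η,ε ∈ {+1,−1}`. -/
theorem parafermion_triple_relations (n : ℕ) (j k l ξ η ε : ℤ)
    (hj : 1 ≤ j) (hjn : j ≤ n) (hk : 1 ≤ k) (hkn : k ≤ n) (hl : 1 ≤ l) (hln : l ≤ n)
    (hξ : ξ = 1 ∨ ξ = -1) (hη : η = 1 ∨ η = -1) (hε : ε = 1 ∨ ε = -1) :
    cbr (cbr (fbar n j ξ) (fbar n k η)) (fbar n l ε) =
      ((|ε - η| : ℤ) : ℂ) • (if k = l then (1 : ℂ) else 0) • fbar n j ξ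
        - ((|ε - ξ| : ℤ) : ℂ) • (if j = l then (1 : ℂ) else 0) • fbar n k η := by
  rcases hξ with rfl | rfl <;> rcases hη with rfl | rfl <;> rcases hε with rfl | rfl <;>
  · simp only [fbar, cbr, show ((1 : ℤ) = 1) = True from by simp,
      show ((-1 : ℤ) = 1) = False from by simp, if_true, if_false,
      smul_sub, sub_mul, mul_sub, add_mul, mul_add, smul_mul_assoc, mul_smul_comm,
      neg_mul, mul_neg, neg_neg, smul_neg, neg_smul, ite_mul, mul_ite, zero_mul, mul_zero,
      smul_ite, smul_zero,
      mul_zz n, mul_zg n, mul_zh n, mul_gz n, mul_gg n, mul_gh n, mul_hz n, mul_hg n, mul_hh n,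
      hj, hjn, hk, hkn, hl, hln, sub_zero, zero_sub, neg_sub, neg_zero, sub_neg_eq_add, sub_self]
    norm_num
    try simp only [show ((2:ℂ)) = sq2 * sq2 from sq2_sq.symm]
    try split_ifs <;> try omega
    all_goals try subst_vars
    all_goals module

end
end

section
/- The paraboson generators b̄ᵢ^+ = √2(e_{0,2i} + e_{2i−1,0}) and b̄ᵢ^− = √2(e_{0,2i−1} − e_{2i,0}) satisfy the paraboson triple relations [{b̄_j^ξ, b̄_k^η}, b̄_l^ε] = (ε−ξ) δ_{jl} b̄_k^η + (ε−η) δ_{kl} b̄_j^ξ for all j,k,l ∈ {1,…,n} and ξ,η,ε ∈ {+1,−1}. -/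
noncomputable section

/-- The paraboson generator `b̄ᵢ^ξ`:
`b̄ᵢ^+ = √2(e_{0,2i} + e_{2i−1,0})`, `b̄ᵢ^− = √2(e_{0,2i−1} − e_{2i,0})`. -/
def bbar (n : ℕ) (i ξ : ℤ) : Matrix (Fin (4 * n + 1)) (Fin (4 * n + 1)) ℂ :=
  if ξ = 1 then sq2 • (eM n 0 (2 * i) + eM n (2 * i - 1) 0)
  else sq2 • (eM n 0 (2 * i - 1) - eM n (2 * i) 0)

/-- Anticommutator `{x,y} = xy + yx`. -/
def abr {α : Type*} [Ring α] (x y : α) : α := x * y + y * x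

lemma eM_mul_s5 (n : ℕ) (a b c d : ℤ) :
    eM n a b * eM n c d =
      if b = c ∧ 0 ≤ b + 2 * n ∧ b + 2 * n ≤ 4 * n then eM n a d else 0 := by
  ext x y
  simp only [Matrix.mul_apply, eM, Matrix.of_apply]
  by_cases hrange : 0 ≤ b + 2 * (n:ℤ) ∧ b + 2 * (n:ℤ) ≤ 4 * n
  · by_cases hbc : b = c
    · subst hbc
      simp only [hrange, and_self, if_true, true_and]
      obtain ⟨h1, h2⟩ := hrange
      have : ∃ z : Fin (4*n+1), (z.val : ℤ) = b + 2*n := by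
        refine ⟨⟨(b + 2*n).toNat, by omega⟩, ?_⟩
        simp only []
        omega
      obtain ⟨z0, hz0⟩ := this
      rw [Finset.sum_eq_single z0]
      · by_cases hx : (x.val:ℤ) = a + 2*n <;> by_cases hy : (y.val:ℤ) = d + 2*n <;>
          simp [hx, hy, hz0]
      · intro z _ hz
        by_cases h : (z.val:ℤ) = b + 2*n
        · exfalso; apply hz; exact Fin.ext (by omega)
        · simp [h]
      · simp
    · simp only [hbc, false_and, if_false]
      rw [Finset.sum_eq_zero]; · simp
      intro z _
      by_cases h1 : (z.val:ℤ) = b + 2*n <;> by_cases h2 : (z.val:ℤ) = c + 2*n <;>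
        simp [h1, h2] <;> omega
  · rw [if_neg (by tauto)]
    rw [Finset.sum_eq_zero]; · simp
    intro z _
    have : ¬ ((z.val:ℤ) = b + 2*n) := by
      have := z.isLt; omega
    simp [this]

lemma sq2_cube : sq2 * sq2 * sq2 = 2 * sq2 := by rw [sq2_sq]

lemma sq2_cube' : sq2 * (sq2 * sq2) = 2 * sq2 := by rw [sq2_sq, mul_comm]

set_option maxHeartbeats 4000000 in
/-- the paraboson triple relations
`[{b̄_j^ξ, b̄_k^η}, b̄_l^ε] = (ε−ξ) δ_{jl} b̄_k^η + (ε−η) δ_{kl} b̄_j^ξ`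
for `j,k,l ∈ {1,…,n}` and `ξ,η,ε ∈ {+1,−1}`. -/
theorem paraboson_triple_relations (n : ℕ) (j k l ξ η ε : ℤ)
    (hj : 1 ≤ j) (hjn : j ≤ n) (hk : 1 ≤ k) (hkn : k ≤ n) (hl : 1 ≤ l) (hln : l ≤ n)
    (hξ : ξ = 1 ∨ ξ = -1) (hη : η = 1 ∨ η = -1) (hε : ε = 1 ∨ ε = -1) :
    cbr (abr (bbar n j ξ) (bbar n k η)) (bbar n l ε) =
      ((ε - ξ : ℤ) : ℂ) • (if j = l then (1 : ℂ) else 0) • bbar n k η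
        + ((ε - η : ℤ) : ℂ) • (if k = l then (1 : ℂ) else 0) • bbar n j ξ := by
  have R1 : ∀ p : ℤ, 1 ≤ p → p ≤ n → ((0:ℤ) ≤ 2*p + 2*n ∧ 2*p + 2*n ≤ 4*n) := by
    intro p h1 h2; omega
  have R2 : ∀ p : ℤ, 1 ≤ p → p ≤ n → ((0:ℤ) ≤ 2*p - 1 + 2*n ∧ 2*p - 1 + 2*n ≤ 4*n) := by
    intro p h1 h2; omega
  obtain ⟨rj1, rj2⟩ := R1 j hj hjn
  obtain ⟨rk1, rk2⟩ := R1 k hk hkn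
  obtain ⟨rl1, rl2⟩ := R1 l hl hln
  obtain ⟨sj1, sj2⟩ := R2 j hj hjn
  obtain ⟨sk1, sk2⟩ := R2 k hk hkn
  obtain ⟨sl1, sl2⟩ := R2 l hl hln
  have r01 : (0:ℤ) ≤ 0 + 2*n := by omega
  have r01' : (0:ℤ) ≤ 2*n := by omega
  have r02 : (0:ℤ) + 2*n ≤ 4*n := by omega
  have r02' : (2:ℤ)*n ≤ 4*n := by omega
  have ejk : ((2*j:ℤ) = 2*k) ↔ j = k := by omega
  have ekj : ((2*k:ℤ) = 2*j) ↔ k = j := by omega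
  have ejl : ((2*j:ℤ) = 2*l) ↔ j = l := by omega
  have elj : ((2*l:ℤ) = 2*j) ↔ l = j := by omega
  have ekl : ((2*k:ℤ) = 2*l) ↔ k = l := by omega
  have elk : ((2*l:ℤ) = 2*k) ↔ l = k := by omega
  have fjk : ((2*j-1:ℤ) = 2*k-1) ↔ j = k := by omega
  have fkj : ((2*k-1:ℤ) = 2*j-1) ↔ k = j := by omega
  have fjl : ((2*j-1:ℤ) = 2*l-1) ↔ j = l := by omega
  have flj : ((2*l-1:ℤ) = 2*j-1) ↔ l = j := by omega
  have fkl : ((2*k-1:ℤ) = 2*l-1) ↔ k = l := by omega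
  have flk : ((2*l-1:ℤ) = 2*k-1) ↔ l = k := by omega
  have gjk : ¬((2*j:ℤ) = 2*k-1) := by omega
  have gjl : ¬((2*j:ℤ) = 2*l-1) := by omega
  have gkj : ¬((2*k:ℤ) = 2*j-1) := by omega
  have gkl : ¬((2*k:ℤ) = 2*l-1) := by omega
  have glj : ¬((2*l:ℤ) = 2*j-1) := by omega
  have glk : ¬((2*l:ℤ) = 2*k-1) := by omega
  have hjk' : ¬((2*j-1:ℤ) = 2*k) := by omega
  have hjl' : ¬((2*j-1:ℤ) = 2*l) := by omega
  have hkj' : ¬((2*k-1:ℤ) = 2*j) := by omega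
  have hkl' : ¬((2*k-1:ℤ) = 2*l) := by omega
  have hlj' : ¬((2*l-1:ℤ) = 2*j) := by omega
  have hlk' : ¬((2*l-1:ℤ) = 2*k) := by omega
  have zj : ¬((2*j:ℤ) = 0) := by omega
  have zk : ¬((2*k:ℤ) = 0) := by omega
  have zl : ¬((2*l:ℤ) = 0) := by omega
  have zj' : ¬((2*j-1:ℤ) = 0) := by omega
  have zk' : ¬((2*k-1:ℤ) = 0) := by omega
  have zl' : ¬((2*l-1:ℤ) = 0) := by omega
  have wj : ¬((0:ℤ) = 2*j) := by omega
  have wk : ¬((0:ℤ) = 2*k) := by omega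
  have wl : ¬((0:ℤ) = 2*l) := by omega
  have wj' : ¬((0:ℤ) = 2*j-1) := by omega
  have wk' : ¬((0:ℤ) = 2*k-1) := by omega
  have wl' : ¬((0:ℤ) = 2*l-1) := by omega
  rcases hξ with rfl | rfl <;> rcases hη with rfl | rfl <;> rcases hε with rfl | rfl <;>
  by_cases hjl : j = l <;> by_cases hkl : k = l <;> by_cases hjk : j = k <;>
    (try subst hjl) <;> (try subst hkl) <;> (try subst hjk) <;>
    (try simp only [if_neg hjl]) <;> (try simp only [if_neg hkl]) <;>
    (try simp only [hjl, hkl, hjk, ite_false, ite_true]) <;>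
    simp only [bbar, cbr, abr, reduceIte, eM_mul_s5,
      rj1, rj2, rk1, rk2, rl1, rl2, sj1, sj2, sk1, sk2, sl1, sl2, r01, r02, r01', r02',
      ejk, ekj, ejl, elj, ekl, elk, fjk, fkj, fjl, flj, fkl, flk,
      gjk, gjl, gkj, gkl, glj, glk, hjk', hjl', hkj', hkl', hlj', hlk',
      zj, zk, zl, zj', zk', zl', wj, wk, wl, wj', wk', wl',
      eq_self_iff_true, ite_true, ite_false, if_true, if_false,
      true_and, and_true, false_and, and_false, and_self,
      smul_mul_assoc, mul_smul_comm, smul_smul, mul_add, add_mul,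
      mul_sub, sub_mul, smul_add, smul_sub, ite_mul, mul_ite, sq2_sq,
      mul_zero, zero_mul, smul_zero, mul_one, one_mul, zero_smul, add_zero, zero_add,
      neg_mul, mul_neg, neg_neg, smul_neg,
      sub_zero, zero_sub] <;>
    (try push_cast) <;>
    (try omega) <;>
    (try split_ifs) <;> (try omega) <;>
    (try simp only [zero_mul, mul_zero, smul_zero, add_zero, zero_add, sub_zero, zero_sub,
      neg_neg, neg_zero, zero_smul, smul_zero, smul_smul, sq2_sq, sq2_cube, sq2_cube',
      neg_smul, mul_one, one_mul]) <;>
    module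

end
end

section
/- The elements E_{jk} = ½⟦c̄_j^+, c̄_k^−⟧ for j,k ∈ [−n,n]\{0}, with c̄_{−i}^± the parafermion and c̄_i^± the paraboson generators, satisfy the gl(n|n) relations E_{ij}E_{kl} − (−1)^{deg(E_{ij})deg(E_{kl})} E_{kl}E_{ij} = δ_{jk}E_{il} − (−1)^{deg(E_{ij})deg(E_{kl})} δ_{il}E_{kj}, where deg(E_{jk}) = 0 if j,k have the same sign and 1 otherwise. -/
noncomputable section

/-- The creation operator `c̄ⱼ^+`: for `j < 0` (parafermion) `√2(e_{2j,0} − e_{0,2j+1})`,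
for `j > 0` (paraboson) `√2(e_{0,2j} + e_{2j−1,0})`. -/
def cp (n : ℕ) (j : ℤ) : Matrix (Fin (4 * n + 1)) (Fin (4 * n + 1)) ℂ :=
  if 0 < j then sq2 • (eM n 0 (2 * j) + eM n (2 * j - 1) 0)
  else sq2 • (eM n (2 * j) 0 - eM n 0 (2 * j + 1))

/-- The annihilation operator `c̄ⱼ^−`: for `j < 0` `√2(e_{0,2j} − e_{2j+1,0})`,
for `j > 0` `√2(e_{0,2j−1} − e_{2j,0})`. -/
def cm (n : ℕ) (j : ℤ) : Matrix (Fin (4 * n + 1)) (Fin (4 * n + 1)) ℂ :=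
  if 0 < j then sq2 • (eM n 0 (2 * j - 1) - eM n (2 * j) 0)
  else sq2 • (eM n 0 (2 * j) - eM n (2 * j + 1) 0)

/-- `E_{jk} = ½⟦c̄_j^+, c̄_k^−⟧`, where the graded bracket is the commutator when both
degrees are `(1,1)` (both indices negative) and the anticommutator otherwise. -/
def EE (n : ℕ) (j k : ℤ) : Matrix (Fin (4 * n + 1)) (Fin (4 * n + 1)) ℂ :=
  if j < 0 ∧ k < 0 then (1 / 2 : ℂ) • cbr (cp n j) (cm n k)
  else (1 / 2 : ℂ) • abr (cp n j) (cm n k)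

/-- The `gl(n|n)`-degree of `E_{jk}`: `0` if `j, k` have the same sign, `1` otherwise. -/
def dgE (j k : ℤ) : ℕ :=
  if (0 < j ∧ 0 < k) ∨ (j < 0 ∧ k < 0) then 0 else 1


set_option maxHeartbeats 1000000 in
lemma eM_mul_s7 (n : ℕ) (i j k l : ℤ) (h0 : -2*(n:ℤ) ≤ j) (h1 : j ≤ 2*(n:ℤ)) :
    eM n i j * eM n k l = if j = k then eM n i l else 0 := by
  ext a b
  rw [Matrix.mul_apply]
  have hc0 : (j + 2*(n:ℤ)).toNat < 4*n+1 := by omega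
  rw [Finset.sum_eq_single (⟨(j + 2*(n:ℤ)).toNat, hc0⟩ : Fin (4*n+1))]
  · simp only [eM, Matrix.of_apply]
    have hcv : (((j + 2*(n:ℤ)).toNat : ℤ)) = j + 2*n := by omega
    by_cases hjk : j = k
    · subst hjk
      rw [if_pos rfl]
      split_ifs with h hh hh <;> simp_all
    · rw [if_neg hjk]
      split_ifs with h hh <;> simp_all <;> omega
  · intro c _ hc
    have : ((c : ℕ) : ℤ) ≠ j + 2*n := by
      intro h
      apply hc
      apply Fin.ext
      show (c : ℕ) = (j + 2*(n:ℤ)).toNat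
      omega
    simp only [eM, Matrix.of_apply]
    rw [if_neg (by tauto)]
    simp
  · intro h; exact absurd (Finset.mem_univ _) h

lemma eM_out (n : ℕ) (i j : ℤ) (h : ¬ (-2*(n:ℤ) ≤ j ∧ j ≤ 2*n)) : eM n i j = 0 := by
  ext a b
  simp only [eM, Matrix.of_apply, Matrix.zero_apply]
  rw [if_neg]
  rintro ⟨h1, h2⟩
  have := b.isLt
  omega

lemma eM_mul_tot (n : ℕ) (i j k l : ℤ) :
    eM n i j * eM n k l = if j = k ∧ -2*(n:ℤ) ≤ j ∧ j ≤ 2*n then eM n i l else 0 := by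
  by_cases h : -2*(n:ℤ) ≤ j ∧ j ≤ 2*n
  · rw [eM_mul_s7 n i j k l h.1 h.2]
    by_cases hjk : j = k
    · rw [if_pos hjk, if_pos ⟨hjk, h⟩]
    · rw [if_neg hjk, if_neg (by tauto)]
  · rw [eM_out n i j h, zero_mul, if_neg (by tauto)]

def rr (j : ℤ) : ℤ := if 0 < j then 2*j - 1 else 2*j
def rr' (j : ℤ) : ℤ := if 0 < j then 2*j else 2*j + 1
def sg (j k : ℤ) : ℂ := if j < 0 ∧ 0 < k then 1 else -1

set_option maxHeartbeats 1000000 in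
lemma EE_eq (n : ℕ) (j k : ℤ) (hj : j ≠ 0) (hjn : |j| ≤ (n:ℤ)) (hk : k ≠ 0)
    (hkn : |k| ≤ (n:ℤ)) :
    EE n j k = eM n (rr j) (rr k) + sg j k • eM n (rr' k) (rr' j) := by
  rw [abs_le] at hjn hkn
  rcases hj.lt_or_gt with hj1 | hj1 <;> rcases hk.lt_or_gt with hk1 | hk1 <;>
    simp only [EE, cp, cm, cbr, abr, rr, rr', sg, hj1, hk1, if_pos, if_neg, hj1.not_gt,
      hk1.not_gt, and_true, true_and, and_false, false_and, if_true, if_false,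
      lt_irrefl, lt_asymm hj1, lt_asymm hk1] <;>
  · simp only [Matrix.smul_mul, Matrix.mul_smul, smul_sub, smul_add, smul_smul, sq2_sq,
      add_mul, mul_add, sub_mul, mul_sub, eM_mul_tot, eq_self_iff_true, true_and]
    split_ifs <;> first | (exfalso; omega) | module

lemma rr_bound {n : ℕ} {j : ℤ} (h1 : -(n:ℤ) ≤ j) (h2 : j ≤ n) :
    -2*(n:ℤ) ≤ rr j ∧ rr j ≤ 2*n := by unfold rr; split_ifs <;> omega

lemma rr'_bound {n : ℕ} {j : ℤ} (h0 : j ≠ 0) (h1 : -(n:ℤ) ≤ j) (h2 : j ≤ n) :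
    -2*(n:ℤ) ≤ rr' j ∧ rr' j ≤ 2*n := by unfold rr'; split_ifs <;> omega

lemma mul1 (n : ℕ) (a b c d : ℤ) (h1 : -(n:ℤ) ≤ b) (h2 : b ≤ n) :
    eM n (rr a) (rr b) * eM n (rr c) (rr d) = if b = c then eM n (rr a) (rr d) else 0 := by
  rw [eM_mul_s7 n _ _ _ _ (rr_bound h1 h2).1 (rr_bound h1 h2).2]
  by_cases h : b = c
  · rw [if_pos (by rw [h]), if_pos h]
  · rw [if_neg, if_neg h]
    intro hh
    apply h
    revert hh
    unfold rr
    split_ifs <;> omega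

lemma mul4 (n : ℕ) (a b c d : ℤ) (h0 : b ≠ 0) (h1 : -(n:ℤ) ≤ b) (h2 : b ≤ n) :
    eM n (rr' a) (rr' b) * eM n (rr' c) (rr' d) = if b = c then eM n (rr' a) (rr' d) else 0 := by
  rw [eM_mul_s7 n _ _ _ _ (rr'_bound h0 h1 h2).1 (rr'_bound h0 h1 h2).2]
  by_cases h : b = c
  · rw [if_pos (by rw [h]), if_pos h]
  · rw [if_neg, if_neg h]
    intro hh
    apply h
    revert hh
    unfold rr'
    split_ifs <;> omega

lemma mul2 (n : ℕ) (a b c d : ℤ) (hb : b ≠ 0) (hc : c ≠ 0) :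
    eM n (rr a) (rr b) * eM n (rr' c) (rr' d) = 0 := by
  rw [eM_mul_tot, if_neg]
  rintro ⟨h, -⟩
  revert h
  unfold rr rr'
  rcases hb.lt_or_gt with h1 | h1 <;> rcases hc.lt_or_gt with h2 | h2 <;>
    split_ifs <;> omega

lemma mul3 (n : ℕ) (a b c d : ℤ) (hb : b ≠ 0) (hc : c ≠ 0) :
    eM n (rr' a) (rr' b) * eM n (rr c) (rr d) = 0 := by
  rw [eM_mul_tot, if_neg]
  rintro ⟨h, -⟩
  revert h
  unfold rr rr'
  rcases hb.lt_or_gt with h1 | h1 <;> rcases hc.lt_or_gt with h2 | h2 <;>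
    split_ifs <;> omega

set_option maxHeartbeats 1000000 in

/-- the elements `E_{jk} = ½⟦c̄_j^+, c̄_k^−⟧` satisfy the `gl(n|n)` relations
`E_{ij}E_{kl} − (−1)^{deg(E_{ij})deg(E_{kl})} E_{kl}E_{ij}
 = δ_{jk}E_{il} − (−1)^{deg(E_{ij})deg(E_{kl})} δ_{il}E_{kj}`. -/
theorem gl_nn_relations (n : ℕ) (i j k l : ℤ)
    (hi : i ≠ 0) (hin : |i| ≤ n) (hj : j ≠ 0) (hjn : |j| ≤ n)
    (hk : k ≠ 0) (hkn : |k| ≤ n) (hl : l ≠ 0) (hln : |l| ≤ n) :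
    EE n i j * EE n k l - ((-1 : ℂ) ^ (dgE i j * dgE k l)) • (EE n k l * EE n i j) =
      (if j = k then (1 : ℂ) else 0) • EE n i l
        - ((-1 : ℂ) ^ (dgE i j * dgE k l)) • (if i = l then (1 : ℂ) else 0) • EE n k j := by
  have hin' := abs_le.mp hin
  have hjn' := abs_le.mp hjn
  have hkn' := abs_le.mp hkn
  have hln' := abs_le.mp hln
  rw [EE_eq n i j hi hin hj hjn, EE_eq n k l hk hkn hl hln, EE_eq n i l hi hin hl hln,
      EE_eq n k j hk hkn hj hjn]
  simp only [add_mul, mul_add, Matrix.smul_mul, Matrix.mul_smul, smul_smul]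
  rw [mul1 n i j k l hjn'.1 hjn'.2, mul2 n i j l k hj hl, mul3 n j i k l hi hk,
      mul4 n j i l k hi hin'.1 hin'.2, mul1 n k l i j hln'.1 hln'.2, mul2 n k l j i hl hj,
      mul3 n l k i j hk hi, mul4 n l k j i hk hkn'.1 hkn'.2]
  rcases hi.lt_or_gt with hi1 | hi1 <;> rcases hj.lt_or_gt with hj1 | hj1 <;>
    rcases hk.lt_or_gt with hk1 | hk1 <;> rcases hl.lt_or_gt with hl1 | hl1 <;>
  · simp only [sg, dgE, hi1, hj1, hk1, hl1, hi1.not_gt, hj1.not_gt, hk1.not_gt, hl1.not_gt,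
      if_true, if_false, and_true, true_and, and_false, false_and, true_or, or_true,
      false_or, or_false, and_self, Nat.mul_one, Nat.one_mul, Nat.mul_zero, Nat.zero_mul,
      pow_zero, pow_one, one_smul, neg_smul, neg_neg, smul_zero, sub_zero, add_zero, zero_add]
    split_ifs <;> first | (exfalso; omega) | module

end
end

section
/- The set of infinite square matrices Y = (Y_{ij})_{i,j∈ℤ} with only finitely many nonzero entries, Y_{00} = 0, and blocks satisfying I Y_{−i,−j} + Y_{−j,−i}^T I = 0, J Y_{ij} + Y_{ji}^T J = 0, I Y_{−i,j} + Y_{j,−i}^T J = 0 (i,j ≥ 1) and Y_{0,−j} + Y_{−j,0}^T I = 0, Y_{0,j} − Y_{j,0}^T J = 0 (j ≥ 0), forms a Z₂×Z₂-graded Lie superalgebra under the bracket ⟦x,y⟧ = xy − (−1)^{a·b} yx: it is closed under the bracket, and the bracket satisfies graded antisymmetry and the graded Jacobi identity. -/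
open Matrix

noncomputable section

/-- Multiplication of infinite `ℤ×ℤ` matrices (well defined on finitely supported ones). -/
def imul (x y : ℤ → ℤ → ℂ) : ℤ → ℤ → ℂ := fun p q => ∑ᶠ r, x p r * y r q

/-- The graded bracket `⟦x,y⟧ = xy − (−1)^{a·b} yx`. -/
def gbrI (a b : ZMod 2 × ZMod 2) (x y : ℤ → ℤ → ℂ) : ℤ → ℤ → ℂ :=
  imul x y - sgn a b • imul y x

/-- The 2×2 block `Y_{ij}` (`i, j ≠ 0`). -/
def blkI (Y : ℤ → ℤ → ℂ) (i j : ℤ) : Matrix (Fin 2) (Fin 2) ℂ :=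
  Matrix.of fun a b => Y (pstart i + (a.val : ℤ)) (pstart j + (b.val : ℤ))

/-- The 1×2 block `Y_{0,j}` (`j ≠ 0`). -/
def rowI (Y : ℤ → ℤ → ℂ) (j : ℤ) : Matrix (Fin 1) (Fin 2) ℂ :=
  Matrix.of fun _ b => Y 0 (pstart j + (b.val : ℤ))

/-- The 2×1 block `Y_{j,0}` (`j ≠ 0`). -/
def colI (Y : ℤ → ℤ → ℂ) (j : ℤ) : Matrix (Fin 2) (Fin 1) ℂ :=
  Matrix.of fun a _ => Y (pstart j + (a.val : ℤ)) 0

/-- Membership in `pso(∞|∞)`: finitely many nonzero entries, `Y₀₀ = 0`, and the block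
conditions `I Y_{−i,−j} + Y_{−j,−i}ᵀ I = 0`, `J Y_{ij} + Y_{ji}ᵀ J = 0`,
`I Y_{−i,j} + Y_{j,−i}ᵀ J = 0` (`i, j ≥ 1`), `Y_{0,−j} + Y_{−j,0}ᵀ I = 0`,
`Y_{0,j} − Y_{j,0}ᵀ J = 0` (`j ≥ 1`; the case `j = 0` being `Y₀₀ = 0`). -/
def psoInf (Y : ℤ → ℤ → ℂ) : Prop :=
  {pq : ℤ × ℤ | Y pq.1 pq.2 ≠ 0}.Finite ∧
  Y 0 0 = 0 ∧
  (∀ i j : ℤ, 1 ≤ i → 1 ≤ j →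
    IM * blkI Y (-i) (-j) + (blkI Y (-j) (-i))ᵀ * IM = 0 ∧
    JM * blkI Y i j + (blkI Y j i)ᵀ * JM = 0 ∧
    IM * blkI Y (-i) j + (blkI Y j (-i))ᵀ * JM = 0) ∧
  (∀ j : ℤ, 1 ≤ j →
    rowI Y (-j) + (colI Y (-j))ᵀ * IM = 0 ∧
    rowI Y j - (colI Y j)ᵀ * JM = 0)

/-- Homogeneity of degree `d` for infinite matrices. -/
def homogI (d : ZMod 2 × ZMod 2) (Y : ℤ → ℤ → ℂ) : Prop :=
  ∀ p q : ℤ, blkdeg (blockIdx p) (blockIdx q) ≠ d → Y p q = 0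


section Aux
open Function
def chi (t : ZMod 2) : ℂ := if t = 0 then 1 else -1
lemma sgn_eq (a b : ZMod 2 × ZMod 2) : sgn a b = chi (a.1*b.1 + a.2*b.2) := rfl
lemma chi_add (s t : ZMod 2) : chi (s + t) = chi s * chi t := by
  have hs := (show ∀ u : ZMod 2, u = 0 ∨ u = 1 by decide) s
  have ht := (show ∀ u : ZMod 2, u = 0 ∨ u = 1 by decide) t
  rcases hs with hs|hs <;> rcases ht with ht|ht <;> subst hs <;> subst ht <;>
    norm_num [chi] <;> decide
lemma sgn_comm (a b : ZMod 2 × ZMod 2) : sgn a b = sgn b a := by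
  rw [sgn_eq, sgn_eq]; ring_nf
lemma sgn_mul_self (a b : ZMod 2 × ZMod 2) : sgn a b * sgn a b = 1 := by
  rw [sgn_eq]; unfold chi; split_ifs <;> norm_num
lemma sgn_add_left (a b c : ZMod 2 × ZMod 2) : sgn (a+b) c = sgn a c * sgn b c := by
  rw [sgn_eq, sgn_eq, sgn_eq, ← chi_add]; congr 1; simp [Prod.fst_add, Prod.snd_add]; ring
lemma sgn_add_right (a b c : ZMod 2 × ZMod 2) : sgn a (b+c) = sgn a b * sgn a c := by
  rw [sgn_comm, sgn_add_left, sgn_comm b a, sgn_comm c a]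

-- support lemmas
def FinSupp (x : ℤ → ℤ → ℂ) : Prop := {pq : ℤ × ℤ | x pq.1 pq.2 ≠ 0}.Finite

lemma rowFin {x : ℤ → ℤ → ℂ} (hx : FinSupp x) (p : ℤ) :
    (support fun r => x p r).Finite := by
  have : (support fun r => x p r) ⊆ (fun r => ((p, r) : ℤ × ℤ)) ⁻¹' {pq : ℤ × ℤ | x pq.1 pq.2 ≠ 0} := by
    intro r hr; exact hr
  exact Set.Finite.subset (Set.Finite.preimage (fun a _ b _ h => by simpa using (Prod.mk.injEq _ _ _ _ ▸ h).2) hx) this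

lemma colFin {x : ℤ → ℤ → ℂ} (hx : FinSupp x) (q : ℤ) :
    (support fun r => x r q).Finite := by
  have : (support fun r => x r q) ⊆ (fun r => ((r, q) : ℤ × ℤ)) ⁻¹' {pq : ℤ × ℤ | x pq.1 pq.2 ≠ 0} := by
    intro r hr; exact hr
  exact Set.Finite.subset (Set.Finite.preimage (fun a _ b _ h => by simpa using (Prod.mk.injEq _ _ _ _ ▸ h).1) hx) this

lemma termFinL {x y : ℤ → ℤ → ℂ} (hx : FinSupp x) (p q : ℤ) :
    (support fun r => x p r * y r q).Finite :=
  (rowFin hx p).subset (fun r hr => by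
    simp only [mem_support] at hr ⊢; exact fun h => hr (by simp [h]))

lemma imul_finSupp {x y : ℤ → ℤ → ℂ} (hx : FinSupp x) (hy : FinSupp y) :
    FinSupp (imul x y) := by
  have : {pq : ℤ × ℤ | imul x y pq.1 pq.2 ≠ 0} ⊆
      (Prod.fst '' {pq : ℤ × ℤ | x pq.1 pq.2 ≠ 0}) ×ˢ (Prod.snd '' {pq : ℤ × ℤ | y pq.1 pq.2 ≠ 0}) := by
    rintro ⟨p, q⟩ hpq
    simp only [Set.mem_setOf_eq, imul] at hpq
    obtain ⟨r, hr⟩ : ∃ r, x p r * y r q ≠ 0 := by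
      by_contra h; push_neg at h
      exact hpq (by simp [finsum_eq_zero_of_forall_eq_zero h])
    constructor
    · exact ⟨(p, r), fun h => hr (by simp [h]), rfl⟩
    · exact ⟨(r, q), fun h => hr (by simp [h]), rfl⟩
  exact Set.Finite.subset ((hx.image _).prod (hy.image _)) this

lemma FinSupp.sub {x y : ℤ → ℤ → ℂ} (hx : FinSupp x) (hy : FinSupp y) :
    FinSupp (x - y) := by
  refine (hx.union hy).subset ?_
  rintro ⟨p, q⟩ h
  simp only [Set.mem_setOf_eq, Pi.sub_apply] at h
  by_contra hc
  simp only [Set.mem_union, Set.mem_setOf_eq, not_or, not_not] at hc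
  exact h (by simp [hc.1, hc.2])

lemma FinSupp.smul {x : ℤ → ℤ → ℂ} (c : ℂ) (hx : FinSupp x) : FinSupp (c • x) := by
  refine hx.subset ?_
  rintro ⟨p, q⟩ h
  simp only [Set.mem_setOf_eq, Pi.smul_apply, smul_eq_mul] at h ⊢
  exact fun hc => h (by simp [hc])

-- imul algebra
lemma imul_assoc {x y z : ℤ → ℤ → ℂ} (hx : FinSupp x) (hz : FinSupp z) :
    imul (imul x y) z = imul x (imul y z) := by
  funext p q
  classical
  set R : Finset ℤ := (rowFin hx p).toFinset with hR
  set S : Finset ℤ := (colFin hz q).toFinset with hS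
  have hinner : ∀ s, imul x y p s = ∑ r ∈ R, x p r * y r s := fun s =>
    finsum_eq_sum_of_support_subset _ (fun r hr => by
      simp only [hR, Set.Finite.coe_toFinset, mem_support] at *
      exact fun h => hr (by rw [h, zero_mul]))
  have houter : ∀ r, imul y z r q = ∑ s ∈ S, y r s * z s q := fun r =>
    finsum_eq_sum_of_support_subset _ (fun s hs => by
      simp only [hS, Set.Finite.coe_toFinset, mem_support] at *
      exact fun h => hs (by rw [h, mul_zero]))
  calc imul (imul x y) z p q
      = ∑ s ∈ S, imul x y p s * z s q := by
        refine finsum_eq_sum_of_support_subset _ (fun s hs => ?_)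
        simp only [hS, Set.Finite.coe_toFinset, mem_support] at *
        exact fun h => hs (by rw [h, mul_zero])
    _ = ∑ s ∈ S, ∑ r ∈ R, x p r * y r s * z s q := by
        refine Finset.sum_congr rfl (fun s _ => ?_)
        rw [hinner s, Finset.sum_mul]
    _ = ∑ r ∈ R, ∑ s ∈ S, x p r * (y r s * z s q) := by
        rw [Finset.sum_comm]
        exact Finset.sum_congr rfl (fun r _ => Finset.sum_congr rfl (fun s _ => by ring))
    _ = ∑ r ∈ R, x p r * imul y z r q := by
        refine Finset.sum_congr rfl (fun r _ => ?_)
        rw [houter r, Finset.mul_sum]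
    _ = imul x (imul y z) p q := by
        refine (finsum_eq_sum_of_support_subset _ (fun r hr => ?_)).symm
        simp only [hR, Set.Finite.coe_toFinset, mem_support] at *
        exact fun h => hr (by rw [h, zero_mul])

lemma imul_sub_right {x : ℤ → ℤ → ℂ} (hx : FinSupp x) (u v : ℤ → ℤ → ℂ) :
    imul x (u - v) = imul x u - imul x v := by
  funext p q
  simp only [imul, Pi.sub_apply]
  rw [← finsum_sub_distrib (termFinL hx p q) (termFinL hx p q)]
  exact finsum_congr (fun r => by ring)

lemma imul_smul_right {x : ℤ → ℤ → ℂ} (hx : FinSupp x) (c : ℂ) (u : ℤ → ℤ → ℂ) :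
    imul x (c • u) = c • imul x u := by
  funext p q
  simp only [imul, Pi.smul_apply, smul_eq_mul]
  rw [mul_finsum _ _]
  exact finsum_congr (fun r => by ring)

lemma termFinR {x y : ℤ → ℤ → ℂ} (hy : FinSupp y) (p q : ℤ) :
    (support fun r => x p r * y r q).Finite :=
  (colFin hy q).subset (fun r hr => by
    simp only [mem_support] at hr ⊢; exact fun h => hr (by simp [h]))

lemma imul_sub_left {u v : ℤ → ℤ → ℂ} (hu : FinSupp u) (hv : FinSupp v) (x : ℤ → ℤ → ℂ) :
    imul (u - v) x = imul u x - imul v x := by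
  funext p q
  simp only [imul, Pi.sub_apply]
  rw [← finsum_sub_distrib (termFinL hu p q) (termFinL hv p q)]
  exact finsum_congr (fun r => by ring)

lemma imul_smul_left {u : ℤ → ℤ → ℂ} (hu : FinSupp u) (c : ℂ) (x : ℤ → ℤ → ℂ) :
    imul (c • u) x = c • imul u x := by
  funext p q
  simp only [imul, Pi.smul_apply, smul_eq_mul]
  rw [mul_finsum _ _]
  exact finsum_congr (fun r => by ring)

lemma sgn_cases (a b : ZMod 2 × ZMod 2) : sgn a b = 1 ∨ sgn a b = -1 := by
  unfold sgn; split_ifs <;> simp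

lemma gbr_antisym (a b : ZMod 2 × ZMod 2) (x y : ℤ → ℤ → ℂ) :
    gbrI a b x y = -(sgn a b • gbrI b a y x) := by
  funext p q
  have h := sgn_mul_self a b
  simp only [gbrI, Pi.sub_apply, Pi.neg_apply, Pi.smul_apply, smul_eq_mul, sgn_comm b a]
  linear_combination (-(imul x y p q)) * h

lemma gbr_finSupp {a b : ZMod 2 × ZMod 2} {x y : ℤ → ℤ → ℂ} (hx : FinSupp x) (hy : FinSupp y) :
    FinSupp (gbrI a b x y) :=
  (imul_finSupp hx hy).sub (FinSupp.smul _ (imul_finSupp hy hx))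

lemma gbr_jacobi (a b c : ZMod 2 × ZMod 2) (x y z : ℤ → ℤ → ℂ)
    (fx : FinSupp x) (fy : FinSupp y) (fz : FinSupp z) :
    gbrI a (b + c) x (gbrI b c y z) =
      gbrI (a + b) c (gbrI a b x y) z + sgn a b • gbrI b (a + c) y (gbrI a c x z) := by
  have e1 : imul x (gbrI b c y z)
      = imul x (imul y z) - sgn b c • imul x (imul z y) := by
    unfold gbrI
    rw [imul_sub_right fx, imul_smul_right fx]
  have e2 : imul (gbrI b c y z) x
      = imul (imul y z) x - sgn b c • imul (imul z y) x := by
    unfold gbrI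
    rw [imul_sub_left (imul_finSupp fy fz) (FinSupp.smul _ (imul_finSupp fz fy)),
      imul_smul_left (imul_finSupp fz fy)]
  have e3 : imul (gbrI a b x y) z
      = imul (imul x y) z - sgn a b • imul (imul y x) z := by
    unfold gbrI
    rw [imul_sub_left (imul_finSupp fx fy) (FinSupp.smul _ (imul_finSupp fy fx)),
      imul_smul_left (imul_finSupp fy fx)]
  have e4 : imul z (gbrI a b x y)
      = imul z (imul x y) - sgn a b • imul z (imul y x) := by
    unfold gbrI
    rw [imul_sub_right fz, imul_smul_right fz]
  have e5 : imul y (gbrI a c x z)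
      = imul y (imul x z) - sgn a c • imul y (imul z x) := by
    unfold gbrI
    rw [imul_sub_right fy, imul_smul_right fy]
  have e6 : imul (gbrI a c x z) y
      = imul (imul x z) y - sgn a c • imul (imul z x) y := by
    unfold gbrI
    rw [imul_sub_left (imul_finSupp fx fz) (FinSupp.smul _ (imul_finSupp fz fx)),
      imul_smul_left (imul_finSupp fz fx)]
  show imul x (gbrI b c y z) - sgn a (b+c) • imul (gbrI b c y z) x
    = (imul (gbrI a b x y) z - sgn (a+b) c • imul z (gbrI a b x y))
      + sgn a b • (imul y (gbrI a c x z) - sgn b (a+c) • imul (gbrI a c x z) y)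
  rw [e1, e2, e3, e4, e5, e6]
  -- associate everything to the right-nested form
  rw [imul_assoc fx fz, imul_assoc fy fz, imul_assoc fy fx, imul_assoc fx fy,
    imul_assoc fz fx, imul_assoc fz fy]
  rw [sgn_add_right a b c, sgn_add_left a b c, sgn_add_right b a c, sgn_comm b a]
  funext p q
  simp only [Pi.sub_apply, Pi.add_apply, Pi.smul_apply, smul_eq_mul]
  rcases sgn_cases a b with h1|h1 <;> rcases sgn_cases a c with h2|h2 <;>
    rcases sgn_cases b c with h3|h3 <;> rw [h1, h2, h3] <;> ring

-- sign machinery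
def sigP (p : ℤ) : ℤ := if p = 0 then 0 else if (0 < p ↔ p % 2 = 1) then p + 1 else p - 1
def tauP (p : ℤ) : ℂ := if 0 < p ∧ p % 2 = 0 then -1 else 1
def lamP (p q : ℤ) : ℂ := if (p < 0 ∧ 0 < q) ∨ (0 < p ∧ q = 0) then 1 else -1
def ccP (p q : ℤ) : ℂ := lamP p q * tauP p * tauP q
def gP (p : ℤ) : ZMod 2 × ZMod 2 := if 0 < p then (0, 1) else if p < 0 then (0, 0) else (1, 1)

lemma sigP_invol (p : ℤ) : sigP (sigP p) = p := by
  unfold sigP; split_ifs <;> omega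
lemma sigP_pos {p : ℤ} (h : 0 < p) : 0 < sigP p := by unfold sigP; split_ifs <;> omega
lemma sigP_neg {p : ℤ} (h : p < 0) : sigP p < 0 := by unfold sigP; split_ifs <;> omega
lemma sigP_zero : sigP 0 = 0 := rfl
lemma tauP_sq (p : ℤ) : tauP p * tauP p = 1 := by unfold tauP; split_ifs <;> norm_num
lemma tauP_ne (p : ℤ) : tauP p ≠ 0 := by unfold tauP; split_ifs <;> norm_num
lemma lamP_ne (p q : ℤ) : lamP p q ≠ 0 := by unfold lamP; split_ifs <;> norm_num
lemma ccP_ne (p q : ℤ) : ccP p q ≠ 0 := by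
  unfold ccP; exact mul_ne_zero (mul_ne_zero (lamP_ne p q) (tauP_ne p)) (tauP_ne q)

lemma blockIdx_pos {p : ℤ} (h : 0 < p) : 0 < blockIdx p := by unfold blockIdx; split_ifs <;> omega
lemma blockIdx_neg {p : ℤ} (h : p < 0) : blockIdx p < 0 := by unfold blockIdx; split_ifs <;> omega
lemma blockIdx_zero : blockIdx 0 = 0 := rfl

lemma gP_blockIdx (p : ℤ) : gP (blockIdx p) = gP p := by
  rcases lt_trichotomy 0 p with h|h|h
  · rw [gP, if_pos (blockIdx_pos h), gP, if_pos h]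
  · subst h; rfl
  · rw [gP, if_neg (by have := blockIdx_neg h; omega), if_pos (blockIdx_neg h),
      gP, if_neg (by omega), if_pos h]

lemma blkdeg_eq (i j : ℤ) : blkdeg i j = gP i + gP j := by
  rcases lt_trichotomy 0 i with hi|hi|hi <;> rcases lt_trichotomy 0 j with hj|hj|hj <;>
    simp only [blkdeg, gP] <;> split_ifs <;> first | rfl | omega | decide | (exfalso; omega)

lemma sgn_eval_one {a b : ZMod 2 × ZMod 2} (h : a.1 * b.1 + a.2 * b.2 = 0) : sgn a b = 1 :=
  if_pos h
lemma sgn_eval_neg {a b : ZMod 2 × ZMod 2} (h : ¬(a.1 * b.1 + a.2 * b.2 = 0)) : sgn a b = -1 :=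
  if_neg h

lemma padd0000 : ((0,0) : ZMod 2 × ZMod 2) + (0,0) = (0,0) := by decide
lemma padd0001 : ((0,0) : ZMod 2 × ZMod 2) + (0,1) = (0,1) := by decide
lemma padd0011 : ((0,0) : ZMod 2 × ZMod 2) + (1,1) = (1,1) := by decide
lemma padd0100 : ((0,1) : ZMod 2 × ZMod 2) + (0,0) = (0,1) := by decide
lemma padd0101 : ((0,1) : ZMod 2 × ZMod 2) + (0,1) = (0,0) := by decide
lemma padd0111 : ((0,1) : ZMod 2 × ZMod 2) + (1,1) = (1,0) := by decide
lemma padd1100 : ((1,1) : ZMod 2 × ZMod 2) + (0,0) = (1,1) := by decide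
lemma padd1101 : ((1,1) : ZMod 2 × ZMod 2) + (0,1) = (1,0) := by decide
lemma padd1111 : ((1,1) : ZMod 2 × ZMod 2) + (1,1) = (0,0) := by decide
lemma sg0000 : sgn ((0,0) : ZMod 2 × ZMod 2) (0,0) = 1 := sgn_eval_one (by decide)
lemma sg0001 : sgn ((0,0) : ZMod 2 × ZMod 2) (0,1) = 1 := sgn_eval_one (by decide)
lemma sg0010 : sgn ((0,0) : ZMod 2 × ZMod 2) (1,0) = 1 := sgn_eval_one (by decide)
lemma sg0011 : sgn ((0,0) : ZMod 2 × ZMod 2) (1,1) = 1 := sgn_eval_one (by decide)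
lemma sg0100 : sgn ((0,1) : ZMod 2 × ZMod 2) (0,0) = 1 := sgn_eval_one (by decide)
lemma sg0101 : sgn ((0,1) : ZMod 2 × ZMod 2) (0,1) = -1 := sgn_eval_neg (by decide)
lemma sg0110 : sgn ((0,1) : ZMod 2 × ZMod 2) (1,0) = 1 := sgn_eval_one (by decide)
lemma sg0111 : sgn ((0,1) : ZMod 2 × ZMod 2) (1,1) = -1 := sgn_eval_neg (by decide)
lemma sg1000 : sgn ((1,0) : ZMod 2 × ZMod 2) (0,0) = 1 := sgn_eval_one (by decide)
lemma sg1001 : sgn ((1,0) : ZMod 2 × ZMod 2) (0,1) = 1 := sgn_eval_one (by decide)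
lemma sg1010 : sgn ((1,0) : ZMod 2 × ZMod 2) (1,0) = -1 := sgn_eval_neg (by decide)
lemma sg1011 : sgn ((1,0) : ZMod 2 × ZMod 2) (1,1) = -1 := sgn_eval_neg (by decide)
lemma sg1100 : sgn ((1,1) : ZMod 2 × ZMod 2) (0,0) = 1 := sgn_eval_one (by decide)
lemma sg1101 : sgn ((1,1) : ZMod 2 × ZMod 2) (0,1) = -1 := sgn_eval_neg (by decide)
lemma sg1110 : sgn ((1,1) : ZMod 2 × ZMod 2) (1,0) = -1 := sgn_eval_neg (by decide)
lemma sg1111 : sgn ((1,1) : ZMod 2 × ZMod 2) (1,1) = 1 := sgn_eval_one (by decide)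

set_option maxHeartbeats 1000000 in
lemma lamSign (p r q : ℤ) :
    lamP p r * lamP r q = -(sgn (gP p + gP r) (gP r + gP q)) * lamP p q := by
  rcases lt_trichotomy 0 p with hp|hp|hp <;> rcases lt_trichotomy 0 r with hr|hr|hr <;>
    rcases lt_trichotomy 0 q with hq|hq|hq <;>
    simp only [lamP, gP] <;> split_ifs <;>
    first
      | (exfalso; omega)
      | (simp only [padd0000, padd0001, padd0011, padd0100, padd0101, padd0111, padd1100, padd1101, padd1111]; simp only [sg0000, sg0001, sg0010, sg0011, sg0100, sg0101, sg0110, sg0111, sg1000, sg1001, sg1010, sg1011, sg1100, sg1101, sg1110, sg1111]; try norm_num)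

lemma keySign (p r q : ℤ) :
    ccP p r * ccP r q = -(sgn (gP p + gP r) (gP r + gP q)) * ccP p q := by
  have : ccP p r * ccP r q
      = (lamP p r * lamP r q) * tauP p * tauP q * (tauP r * tauP r) := by
    unfold ccP; ring
  rw [this, tauP_sq, lamSign, ccP]; ring

def EscP (Y : ℤ → ℤ → ℂ) : Prop :=
  ∀ i j : ℤ, 1 ≤ i → 1 ≤ j →
    ((Y (-(2*i)+1) (-(2*j)) + Y (-(2*j)+1) (-(2*i)) = 0 ∧
      Y (-(2*i)+1) (-(2*j)+1) + Y (-(2*j)) (-(2*i)) = 0) ∧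
     Y (-(2*i)) (-(2*j)) + Y (-(2*j)+1) (-(2*i)+1) = 0 ∧
     Y (-(2*i)) (-(2*j)+1) + Y (-(2*j)) (-(2*i)+1) = 0) ∧
    ((Y (2*i) (2*j-1) + -Y (2*j) (2*i-1) = 0 ∧ Y (2*i) (2*j) + Y (2*j-1) (2*i-1) = 0) ∧
     -Y (2*i-1) (2*j-1) + -Y (2*j) (2*i) = 0 ∧ -Y (2*i-1) (2*j) + Y (2*j-1) (2*i) = 0) ∧
    ((Y (-(2*i)+1) (2*j-1) + -Y (2*j) (-(2*i)) = 0 ∧ Y (-(2*i)+1) (2*j) + Y (2*j-1) (-(2*i)) = 0) ∧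
     Y (-(2*i)) (2*j-1) + -Y (2*j) (-(2*i)+1) = 0 ∧ Y (-(2*i)) (2*j) + Y (2*j-1) (-(2*i)+1) = 0) ∧
    ((Y 0 (-(2*j)) + Y (-(2*j)+1) 0 = 0 ∧ Y 0 (-(2*j)+1) + Y (-(2*j)) 0 = 0) ∧
     (Y 0 (2*j-1) + Y (2*j) 0 = 0 ∧ Y 0 (2*j) - Y (2*j-1) 0 = 0))

def EP (Y : ℤ → ℤ → ℂ) : Prop := ∀ p q : ℤ, Y p q = ccP p q * Y (sigP q) (sigP p)

lemma esc_of_psoInf {Y : ℤ → ℤ → ℂ} (hY : psoInf Y) : EscP Y := by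
  intro i j hi hj
  obtain ⟨-, -, hblk, hrc⟩ := hY
  obtain ⟨h1, h2, h3⟩ := hblk i j hi hj
  obtain ⟨h4, h5⟩ := hrc j hj
  have hp : pstart (-i) = -(2*i) := by unfold pstart; split_ifs <;> omega
  have hq : pstart (-j) = -(2*j) := by unfold pstart; split_ifs <;> omega
  have hp2 : pstart i = 2*i - 1 := by unfold pstart; split_ifs <;> omega
  have hq2 : pstart j = 2*j - 1 := by unfold pstart; split_ifs <;> omega
  rw [← Matrix.ext_iff] at h1 h2 h3 h4 h5
  simp only [Matrix.add_apply, Matrix.sub_apply, Matrix.mul_apply, Fin.sum_univ_two,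
    Matrix.transpose_apply, IM, JM, blkI, rowI, colI, Matrix.of_apply, Matrix.zero_apply,
    Fin.forall_fin_two, Fin.forall_fin_one] at h1 h2 h3 h4 h5
  simp only [Matrix.cons_val', Matrix.cons_val_zero, Matrix.cons_val_one, Matrix.head_cons,
    Matrix.empty_val', Matrix.cons_val_fin_one, Matrix.head_fin_const, Fin.val_zero, Fin.val_one,
    Fin.isValue, hp, hq, hp2, hq2] at h1 h2 h3 h4 h5
  norm_num at h1 h2 h3 h4 h5
  exact ⟨h1, h2, h3, h4, h5⟩

lemma psoInf_of_esc {Y : ℤ → ℤ → ℂ} (hfin : FinSupp Y) (h00 : Y 0 0 = 0)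
    (esc : EscP Y) : psoInf Y := by
  refine ⟨hfin, h00, fun i j hi hj => ?_, fun j hj => ?_⟩
  · have hp : pstart (-i) = -(2*i) := by unfold pstart; split_ifs <;> omega
    have hq : pstart (-j) = -(2*j) := by unfold pstart; split_ifs <;> omega
    have hp2 : pstart i = 2*i - 1 := by unfold pstart; split_ifs <;> omega
    have hq2 : pstart j = 2*j - 1 := by unfold pstart; split_ifs <;> omega
    obtain ⟨e1, e2, e3, -⟩ := esc i j hi hj
    refine ⟨?_, ?_, ?_⟩ <;>
      (rw [← Matrix.ext_iff]
       simp only [Matrix.add_apply, Matrix.sub_apply, Matrix.mul_apply, Fin.sum_univ_two,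
         Matrix.transpose_apply, IM, JM, blkI, rowI, colI, Matrix.of_apply, Matrix.zero_apply,
         Fin.forall_fin_two, Fin.forall_fin_one]
       simp only [Matrix.cons_val', Matrix.cons_val_zero, Matrix.cons_val_one, Matrix.head_cons,
         Matrix.empty_val', Matrix.cons_val_fin_one, Matrix.head_fin_const, Fin.val_zero,
         Fin.val_one, Fin.isValue, hp, hq, hp2, hq2]
       norm_num)
    · exact e1
    · exact e2
    · exact e3
  · have hq : pstart (-j) = -(2*j) := by unfold pstart; split_ifs <;> omega
    have hq2 : pstart j = 2*j - 1 := by unfold pstart; split_ifs <;> omega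
    obtain ⟨-, -, -, e4, e5⟩ := esc j j hj hj
    refine ⟨?_, ?_⟩ <;>
      (rw [← Matrix.ext_iff]
       simp only [Matrix.add_apply, Matrix.sub_apply, Matrix.mul_apply, Fin.sum_univ_two,
         Matrix.transpose_apply, IM, JM, blkI, rowI, colI, Matrix.of_apply, Matrix.zero_apply,
         Fin.forall_fin_two, Fin.forall_fin_one]
       simp only [Matrix.cons_val', Matrix.cons_val_zero, Matrix.cons_val_one, Matrix.head_cons,
         Matrix.empty_val', Matrix.cons_val_fin_one, Matrix.head_fin_const, Fin.val_zero,
         Fin.val_one, Fin.isValue, hq, hq2]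
       norm_num)
    · exact e4
    · exact e5

lemma esc_of_E {Y : ℤ → ℤ → ℂ} (hE : EP Y) : EscP Y := by
  intro i j hi hj
  refine ⟨⟨⟨?_, ?_⟩, ?_, ?_⟩, ⟨⟨?_, ?_⟩, ?_, ?_⟩, ⟨⟨?_, ?_⟩, ?_, ?_⟩, ⟨?_, ?_⟩, ⟨?_, ?_⟩⟩
  · have h := hE (-(2*i)+1) (-(2*j))
    rw [show sigP (-(2*j)) = -(2*j)+1 by unfold sigP; split_ifs <;> omega, show sigP (-(2*i)+1) = -(2*i) by unfold sigP; split_ifs <;> omega, show ccP (-(2*i)+1) (-(2*j)) = -1 by unfold ccP lamP tauP; split_ifs <;> first | (exfalso; omega) | norm_num] at h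
    linear_combination h
  · have h := hE (-(2*i)+1) (-(2*j)+1)
    rw [show sigP (-(2*j)+1) = -(2*j) by unfold sigP; split_ifs <;> omega, show sigP (-(2*i)+1) = -(2*i) by unfold sigP; split_ifs <;> omega, show ccP (-(2*i)+1) (-(2*j)+1) = -1 by unfold ccP lamP tauP; split_ifs <;> first | (exfalso; omega) | norm_num] at h
    linear_combination h
  · have h := hE (-(2*i)) (-(2*j))
    rw [show sigP (-(2*j)) = -(2*j)+1 by unfold sigP; split_ifs <;> omega, show sigP (-(2*i)) = -(2*i)+1 by unfold sigP; split_ifs <;> omega, show ccP (-(2*i)) (-(2*j)) = -1 by unfold ccP lamP tauP; split_ifs <;> first | (exfalso; omega) | norm_num] at h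
    linear_combination h
  · have h := hE (-(2*i)) (-(2*j)+1)
    rw [show sigP (-(2*j)+1) = -(2*j) by unfold sigP; split_ifs <;> omega, show sigP (-(2*i)) = -(2*i)+1 by unfold sigP; split_ifs <;> omega, show ccP (-(2*i)) (-(2*j)+1) = -1 by unfold ccP lamP tauP; split_ifs <;> first | (exfalso; omega) | norm_num] at h
    linear_combination h
  · have h := hE (2*i) (2*j-1)
    rw [show sigP (2*j-1) = 2*j by unfold sigP; split_ifs <;> omega, show sigP (2*i) = 2*i-1 by unfold sigP; split_ifs <;> omega, show ccP (2*i) (2*j-1) = 1 by unfold ccP lamP tauP; split_ifs <;> first | (exfalso; omega) | norm_num] at h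
    linear_combination h
  · have h := hE (2*i) (2*j)
    rw [show sigP (2*j) = 2*j-1 by unfold sigP; split_ifs <;> omega, show sigP (2*i) = 2*i-1 by unfold sigP; split_ifs <;> omega, show ccP (2*i) (2*j) = -1 by unfold ccP lamP tauP; split_ifs <;> first | (exfalso; omega) | norm_num] at h
    linear_combination h
  · have h := hE (2*i-1) (2*j-1)
    rw [show sigP (2*j-1) = 2*j by unfold sigP; split_ifs <;> omega, show sigP (2*i-1) = 2*i by unfold sigP; split_ifs <;> omega, show ccP (2*i-1) (2*j-1) = -1 by unfold ccP lamP tauP; split_ifs <;> first | (exfalso; omega) | norm_num] at h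
    linear_combination -h
  · have h := hE (2*i-1) (2*j)
    rw [show sigP (2*j) = 2*j-1 by unfold sigP; split_ifs <;> omega, show sigP (2*i-1) = 2*i by unfold sigP; split_ifs <;> omega, show ccP (2*i-1) (2*j) = 1 by unfold ccP lamP tauP; split_ifs <;> first | (exfalso; omega) | norm_num] at h
    linear_combination -h
  · have h := hE (-(2*i)+1) (2*j-1)
    rw [show sigP (2*j-1) = 2*j by unfold sigP; split_ifs <;> omega, show sigP (-(2*i)+1) = -(2*i) by unfold sigP; split_ifs <;> omega, show ccP (-(2*i)+1) (2*j-1) = 1 by unfold ccP lamP tauP; split_ifs <;> first | (exfalso; omega) | norm_num] at h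
    linear_combination h
  · have h := hE (-(2*i)+1) (2*j)
    rw [show sigP (2*j) = 2*j-1 by unfold sigP; split_ifs <;> omega, show sigP (-(2*i)+1) = -(2*i) by unfold sigP; split_ifs <;> omega, show ccP (-(2*i)+1) (2*j) = -1 by unfold ccP lamP tauP; split_ifs <;> first | (exfalso; omega) | norm_num] at h
    linear_combination h
  · have h := hE (-(2*i)) (2*j-1)
    rw [show sigP (2*j-1) = 2*j by unfold sigP; split_ifs <;> omega, show sigP (-(2*i)) = -(2*i)+1 by unfold sigP; split_ifs <;> omega, show ccP (-(2*i)) (2*j-1) = 1 by unfold ccP lamP tauP; split_ifs <;> first | (exfalso; omega) | norm_num] at h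
    linear_combination h
  · have h := hE (-(2*i)) (2*j)
    rw [show sigP (2*j) = 2*j-1 by unfold sigP; split_ifs <;> omega, show sigP (-(2*i)) = -(2*i)+1 by unfold sigP; split_ifs <;> omega, show ccP (-(2*i)) (2*j) = -1 by unfold ccP lamP tauP; split_ifs <;> first | (exfalso; omega) | norm_num] at h
    linear_combination h
  · have h := hE (0) (-(2*j))
    rw [show sigP (-(2*j)) = -(2*j)+1 by unfold sigP; split_ifs <;> omega, show sigP (0) = 0 by unfold sigP; split_ifs <;> omega, show ccP (0) (-(2*j)) = -1 by unfold ccP lamP tauP; split_ifs <;> first | (exfalso; omega) | norm_num] at h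
    linear_combination h
  · have h := hE (0) (-(2*j)+1)
    rw [show sigP (-(2*j)+1) = -(2*j) by unfold sigP; split_ifs <;> omega, show sigP (0) = 0 by unfold sigP; split_ifs <;> omega, show ccP (0) (-(2*j)+1) = -1 by unfold ccP lamP tauP; split_ifs <;> first | (exfalso; omega) | norm_num] at h
    linear_combination h
  · have h := hE (0) (2*j-1)
    rw [show sigP (2*j-1) = 2*j by unfold sigP; split_ifs <;> omega, show sigP (0) = 0 by unfold sigP; split_ifs <;> omega, show ccP (0) (2*j-1) = -1 by unfold ccP lamP tauP; split_ifs <;> first | (exfalso; omega) | norm_num] at h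
    linear_combination h
  · have h := hE (0) (2*j)
    rw [show sigP (2*j) = 2*j-1 by unfold sigP; split_ifs <;> omega, show sigP (0) = 0 by unfold sigP; split_ifs <;> omega, show ccP (0) (2*j) = 1 by unfold ccP lamP tauP; split_ifs <;> first | (exfalso; omega) | norm_num] at h
    linear_combination h

lemma E_of_esc {Y : ℤ → ℤ → ℂ} (h00 : Y 0 0 = 0) (esc : EscP Y) : EP Y := by
  have one : (1:ℤ) ≤ 1 := le_refl 1
  intro p q
  have hp : (∃ i, 1 ≤ i ∧ (p = -(2*i) ∨ p = -(2*i)+1)) ∨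
      (∃ i, 1 ≤ i ∧ (p = 2*i-1 ∨ p = 2*i)) ∨ p = 0 := by
    rcases lt_trichotomy 0 p with h|h|h
    · exact Or.inr (Or.inl ⟨(p+1)/2, by omega, by omega⟩)
    · exact Or.inr (Or.inr h.symm)
    · exact Or.inl ⟨(-p+1)/2, by omega, by omega⟩
  have hq : (∃ j, 1 ≤ j ∧ (q = -(2*j) ∨ q = -(2*j)+1)) ∨
      (∃ j, 1 ≤ j ∧ (q = 2*j-1 ∨ q = 2*j)) ∨ q = 0 := by
    rcases lt_trichotomy 0 q with h|h|h
    · exact Or.inr (Or.inl ⟨(q+1)/2, by omega, by omega⟩)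
    · exact Or.inr (Or.inr h.symm)
    · exact Or.inl ⟨(-q+1)/2, by omega, by omega⟩
  rcases hp with ⟨i, hi, hp|hp⟩|⟨i, hi, hp|hp⟩|hp <;>
    rcases hq with ⟨j, hj, hq|hq⟩|⟨j, hj, hq|hq⟩|hq <;> subst hp <;> subst hq
  · have T := esc i j hi hj
    have h := T.1.2.1
    rw [show sigP (-(2*j)) = -(2*j)+1 by unfold sigP; split_ifs <;> omega, show sigP (-(2*i)) = -(2*i)+1 by unfold sigP; split_ifs <;> omega, show ccP (-(2*i)) (-(2*j)) = (-1) by unfold ccP lamP tauP; split_ifs <;> first | (exfalso; omega) | norm_num]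
    first | linear_combination h | linear_combination -h
  · have T := esc i j hi hj
    have h := T.1.2.2
    rw [show sigP (-(2*j)+1) = -(2*j) by unfold sigP; split_ifs <;> omega, show sigP (-(2*i)) = -(2*i)+1 by unfold sigP; split_ifs <;> omega, show ccP (-(2*i)) (-(2*j)+1) = (-1) by unfold ccP lamP tauP; split_ifs <;> first | (exfalso; omega) | norm_num]
    first | linear_combination h | linear_combination -h
  · have T := esc i j hi hj
    have h := T.2.2.1.2.1
    rw [show sigP (2*j-1) = 2*j by unfold sigP; split_ifs <;> omega, show sigP (-(2*i)) = -(2*i)+1 by unfold sigP; split_ifs <;> omega, show ccP (-(2*i)) (2*j-1) = (1) by unfold ccP lamP tauP; split_ifs <;> first | (exfalso; omega) | norm_num]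
    first | linear_combination h | linear_combination -h
  · have T := esc i j hi hj
    have h := T.2.2.1.2.2
    rw [show sigP (2*j) = 2*j-1 by unfold sigP; split_ifs <;> omega, show sigP (-(2*i)) = -(2*i)+1 by unfold sigP; split_ifs <;> omega, show ccP (-(2*i)) (2*j) = (-1) by unfold ccP lamP tauP; split_ifs <;> first | (exfalso; omega) | norm_num]
    first | linear_combination h | linear_combination -h
  · have T := esc 1 i one hi
    have h := T.2.2.2.1.2
    rw [show sigP (0) = 0 by unfold sigP; split_ifs <;> omega, show sigP (-(2*i)) = -(2*i)+1 by unfold sigP; split_ifs <;> omega, show ccP (-(2*i)) (0) = (-1) by unfold ccP lamP tauP; split_ifs <;> first | (exfalso; omega) | norm_num]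
    first | linear_combination h | linear_combination -h
  · have T := esc i j hi hj
    have h := T.1.1.1
    rw [show sigP (-(2*j)) = -(2*j)+1 by unfold sigP; split_ifs <;> omega, show sigP (-(2*i)+1) = -(2*i) by unfold sigP; split_ifs <;> omega, show ccP (-(2*i)+1) (-(2*j)) = (-1) by unfold ccP lamP tauP; split_ifs <;> first | (exfalso; omega) | norm_num]
    first | linear_combination h | linear_combination -h
  · have T := esc i j hi hj
    have h := T.1.1.2
    rw [show sigP (-(2*j)+1) = -(2*j) by unfold sigP; split_ifs <;> omega, show sigP (-(2*i)+1) = -(2*i) by unfold sigP; split_ifs <;> omega, show ccP (-(2*i)+1) (-(2*j)+1) = (-1) by unfold ccP lamP tauP; split_ifs <;> first | (exfalso; omega) | norm_num]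
    first | linear_combination h | linear_combination -h
  · have T := esc i j hi hj
    have h := T.2.2.1.1.1
    rw [show sigP (2*j-1) = 2*j by unfold sigP; split_ifs <;> omega, show sigP (-(2*i)+1) = -(2*i) by unfold sigP; split_ifs <;> omega, show ccP (-(2*i)+1) (2*j-1) = (1) by unfold ccP lamP tauP; split_ifs <;> first | (exfalso; omega) | norm_num]
    first | linear_combination h | linear_combination -h
  · have T := esc i j hi hj
    have h := T.2.2.1.1.2
    rw [show sigP (2*j) = 2*j-1 by unfold sigP; split_ifs <;> omega, show sigP (-(2*i)+1) = -(2*i) by unfold sigP; split_ifs <;> omega, show ccP (-(2*i)+1) (2*j) = (-1) by unfold ccP lamP tauP; split_ifs <;> first | (exfalso; omega) | norm_num]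
    first | linear_combination h | linear_combination -h
  · have T := esc 1 i one hi
    have h := T.2.2.2.1.1
    rw [show sigP (0) = 0 by unfold sigP; split_ifs <;> omega, show sigP (-(2*i)+1) = -(2*i) by unfold sigP; split_ifs <;> omega, show ccP (-(2*i)+1) (0) = (-1) by unfold ccP lamP tauP; split_ifs <;> first | (exfalso; omega) | norm_num]
    first | linear_combination h | linear_combination -h
  · have T := esc j i hj hi
    have h := T.2.2.1.1.2
    rw [show sigP (-(2*j)) = -(2*j)+1 by unfold sigP; split_ifs <;> omega, show sigP (2*i-1) = 2*i by unfold sigP; split_ifs <;> omega, show ccP (2*i-1) (-(2*j)) = (-1) by unfold ccP lamP tauP; split_ifs <;> first | (exfalso; omega) | norm_num]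
    first | linear_combination h | linear_combination -h
  · have T := esc j i hj hi
    have h := T.2.2.1.2.2
    rw [show sigP (-(2*j)+1) = -(2*j) by unfold sigP; split_ifs <;> omega, show sigP (2*i-1) = 2*i by unfold sigP; split_ifs <;> omega, show ccP (2*i-1) (-(2*j)+1) = (-1) by unfold ccP lamP tauP; split_ifs <;> first | (exfalso; omega) | norm_num]
    first | linear_combination h | linear_combination -h
  · have T := esc i j hi hj
    have h := T.2.1.2.1
    rw [show sigP (2*j-1) = 2*j by unfold sigP; split_ifs <;> omega, show sigP (2*i-1) = 2*i by unfold sigP; split_ifs <;> omega, show ccP (2*i-1) (2*j-1) = (-1) by unfold ccP lamP tauP; split_ifs <;> first | (exfalso; omega) | norm_num]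
    first | linear_combination h | linear_combination -h
  · have T := esc i j hi hj
    have h := T.2.1.2.2
    rw [show sigP (2*j) = 2*j-1 by unfold sigP; split_ifs <;> omega, show sigP (2*i-1) = 2*i by unfold sigP; split_ifs <;> omega, show ccP (2*i-1) (2*j) = (1) by unfold ccP lamP tauP; split_ifs <;> first | (exfalso; omega) | norm_num]
    first | linear_combination h | linear_combination -h
  · have T := esc 1 i one hi
    have h := T.2.2.2.2.2
    rw [show sigP (0) = 0 by unfold sigP; split_ifs <;> omega, show sigP (2*i-1) = 2*i by unfold sigP; split_ifs <;> omega, show ccP (2*i-1) (0) = (1) by unfold ccP lamP tauP; split_ifs <;> first | (exfalso; omega) | norm_num]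
    first | linear_combination h | linear_combination -h
  · have T := esc j i hj hi
    have h := T.2.2.1.1.1
    rw [show sigP (-(2*j)) = -(2*j)+1 by unfold sigP; split_ifs <;> omega, show sigP (2*i) = 2*i-1 by unfold sigP; split_ifs <;> omega, show ccP (2*i) (-(2*j)) = (1) by unfold ccP lamP tauP; split_ifs <;> first | (exfalso; omega) | norm_num]
    first | linear_combination h | linear_combination -h
  · have T := esc j i hj hi
    have h := T.2.2.1.2.1
    rw [show sigP (-(2*j)+1) = -(2*j) by unfold sigP; split_ifs <;> omega, show sigP (2*i) = 2*i-1 by unfold sigP; split_ifs <;> omega, show ccP (2*i) (-(2*j)+1) = (1) by unfold ccP lamP tauP; split_ifs <;> first | (exfalso; omega) | norm_num]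
    first | linear_combination h | linear_combination -h
  · have T := esc i j hi hj
    have h := T.2.1.1.1
    rw [show sigP (2*j-1) = 2*j by unfold sigP; split_ifs <;> omega, show sigP (2*i) = 2*i-1 by unfold sigP; split_ifs <;> omega, show ccP (2*i) (2*j-1) = (1) by unfold ccP lamP tauP; split_ifs <;> first | (exfalso; omega) | norm_num]
    first | linear_combination h | linear_combination -h
  · have T := esc i j hi hj
    have h := T.2.1.1.2
    rw [show sigP (2*j) = 2*j-1 by unfold sigP; split_ifs <;> omega, show sigP (2*i) = 2*i-1 by unfold sigP; split_ifs <;> omega, show ccP (2*i) (2*j) = (-1) by unfold ccP lamP tauP; split_ifs <;> first | (exfalso; omega) | norm_num]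
    first | linear_combination h | linear_combination -h
  · have T := esc 1 i one hi
    have h := T.2.2.2.2.1
    rw [show sigP (0) = 0 by unfold sigP; split_ifs <;> omega, show sigP (2*i) = 2*i-1 by unfold sigP; split_ifs <;> omega, show ccP (2*i) (0) = (-1) by unfold ccP lamP tauP; split_ifs <;> first | (exfalso; omega) | norm_num]
    first | linear_combination h | linear_combination -h
  · have T := esc 1 j one hj
    have h := T.2.2.2.1.1
    rw [show sigP (-(2*j)) = -(2*j)+1 by unfold sigP; split_ifs <;> omega, show sigP (0) = 0 by unfold sigP; split_ifs <;> omega, show ccP (0) (-(2*j)) = (-1) by unfold ccP lamP tauP; split_ifs <;> first | (exfalso; omega) | norm_num]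
    first | linear_combination h | linear_combination -h
  · have T := esc 1 j one hj
    have h := T.2.2.2.1.2
    rw [show sigP (-(2*j)+1) = -(2*j) by unfold sigP; split_ifs <;> omega, show sigP (0) = 0 by unfold sigP; split_ifs <;> omega, show ccP (0) (-(2*j)+1) = (-1) by unfold ccP lamP tauP; split_ifs <;> first | (exfalso; omega) | norm_num]
    first | linear_combination h | linear_combination -h
  · have T := esc 1 j one hj
    have h := T.2.2.2.2.1
    rw [show sigP (2*j-1) = 2*j by unfold sigP; split_ifs <;> omega, show sigP (0) = 0 by unfold sigP; split_ifs <;> omega, show ccP (0) (2*j-1) = (-1) by unfold ccP lamP tauP; split_ifs <;> first | (exfalso; omega) | norm_num]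
    first | linear_combination h | linear_combination -h
  · have T := esc 1 j one hj
    have h := T.2.2.2.2.2
    rw [show sigP (2*j) = 2*j-1 by unfold sigP; split_ifs <;> omega, show sigP (0) = 0 by unfold sigP; split_ifs <;> omega, show ccP (0) (2*j) = (1) by unfold ccP lamP tauP; split_ifs <;> first | (exfalso; omega) | norm_num]
    first | linear_combination h | linear_combination -h
  · -- p=0 q=0
    rw [show sigP 0 = 0 from rfl, show ccP (0) (0) = (-1) by unfold ccP lamP tauP; split_ifs <;> first | (exfalso; omega) | norm_num]
    rw [h00]; ring

lemma sigP_inj : Function.Injective sigP :=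
  Function.Involutive.injective sigP_invol

def sigEquiv : ℤ ≃ ℤ := Function.Involutive.toPerm sigP sigP_invol

lemma gP_add_self (u : ZMod 2 × ZMod 2) : u + u = 0 := by
  have := (show ∀ v : ZMod 2 × ZMod 2, v + v = 0 by decide) u
  exact this

lemma imul_rel {a b : ZMod 2 × ZMod 2} {x y : ℤ → ℤ → ℂ}
    (fy : FinSupp y) (hx : homogI a x) (hy : homogI b y)
    (Ex : EP x) (Ey : EP y) (p q : ℤ) :
    imul x y p q = (-(sgn a b) * ccP p q) * imul y x (sigP q) (sigP p) := by
  have term : ∀ r, x p r * y r q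
      = (-(sgn a b) * ccP p q) * (y (sigP q) (sigP r) * x (sigP r) (sigP p)) := by
    intro r
    by_cases h : x p r * y r q = 0
    · have e1 : x (sigP r) (sigP p) = ccP (sigP r) (sigP p) * x p r := by
        have := Ex (sigP r) (sigP p); rwa [sigP_invol, sigP_invol] at this
      have e2 : y (sigP q) (sigP r) = ccP (sigP q) (sigP r) * y r q := by
        have := Ey (sigP q) (sigP r); rwa [sigP_invol, sigP_invol] at this
      rcases mul_eq_zero.mp h with h'|h'
      · rw [e1, e2, h']; ring
      · rw [e1, e2, h']; ring
    · have hxn : x p r ≠ 0 := fun h' => h (by rw [h', zero_mul])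
      have hyn : y r q ≠ 0 := fun h' => h (by rw [h', mul_zero])
      have ha : blkdeg (blockIdx p) (blockIdx r) = a := by
        by_contra hc; exact hxn (hx p r hc)
      have hb : blkdeg (blockIdx r) (blockIdx q) = b := by
        by_contra hc; exact hyn (hy r q hc)
      have hk : ccP p r * ccP r q = -(sgn a b) * ccP p q := by
        have hks := keySign p r q
        rw [← gP_blockIdx p, ← gP_blockIdx r, ← gP_blockIdx q, ← blkdeg_eq, ← blkdeg_eq,
          ha, hb] at hks
        exact hks
      calc x p r * y r q
          = (ccP p r * x (sigP r) (sigP p)) * (ccP r q * y (sigP q) (sigP r)) := by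
            rw [← Ex, ← Ey]
        _ = (ccP p r * ccP r q) * (y (sigP q) (sigP r) * x (sigP r) (sigP p)) := by ring
        _ = (-(sgn a b) * ccP p q) * (y (sigP q) (sigP r) * x (sigP r) (sigP p)) := by
            rw [hk]
  have hsupp : (support fun r => y (sigP q) (sigP r) * x (sigP r) (sigP p)).Finite := by
    have : (support fun r => y (sigP q) (sigP r) * x (sigP r) (sigP p))
        ⊆ sigP ⁻¹' (support fun s => y (sigP q) s * x s (sigP p)) := fun r hr => hr
    exact ((termFinL fy (sigP q) (sigP p)).preimage (sigP_inj.injOn)).subset this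
  calc imul x y p q = ∑ᶠ r, x p r * y r q := rfl
    _ = ∑ᶠ r, (-(sgn a b) * ccP p q) * (y (sigP q) (sigP r) * x (sigP r) (sigP p)) :=
        finsum_congr term
    _ = (-(sgn a b) * ccP p q) * ∑ᶠ r, y (sigP q) (sigP r) * x (sigP r) (sigP p) :=
        (mul_finsum _ _).symm
    _ = (-(sgn a b) * ccP p q) * ∑ᶠ s, y (sigP q) s * x s (sigP p) := by
        congr 1
        exact finsum_comp_equiv sigEquiv (f := fun s => y (sigP q) s * x s (sigP p))
    _ = (-(sgn a b) * ccP p q) * imul y x (sigP q) (sigP p) := rfl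

lemma E_gbr {a b : ZMod 2 × ZMod 2} {x y : ℤ → ℤ → ℂ}
    (fx : FinSupp x) (fy : FinSupp y) (hx : homogI a x) (hy : homogI b y)
    (Ex : EP x) (Ey : EP y) : EP (gbrI a b x y) := by
  intro p q
  have h1 := imul_rel fy hx hy Ex Ey p q
  have h2 := imul_rel fx hy hx Ey Ex p q
  have hs := sgn_mul_self a b
  simp only [gbrI, Pi.sub_apply, Pi.smul_apply, smul_eq_mul]
  rw [h1, h2, sgn_comm b a]
  linear_combination (ccP p q * imul x y (sigP q) (sigP p)) * hs

lemma homog_imul {a b : ZMod 2 × ZMod 2} {x y : ℤ → ℤ → ℂ}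
    (hx : homogI a x) (hy : homogI b y) :
    ∀ p q : ℤ, blkdeg (blockIdx p) (blockIdx q) ≠ a + b → imul x y p q = 0 := by
  intro p q hne
  refine finsum_eq_zero_of_forall_eq_zero (fun r => ?_)
  by_cases h1 : x p r = 0
  · rw [h1, zero_mul]
  by_cases h2 : y r q = 0
  · rw [h2, mul_zero]
  exfalso
  apply hne
  have ha : blkdeg (blockIdx p) (blockIdx r) = a := by
    by_contra hc; exact h1 (hx p r hc)
  have hb : blkdeg (blockIdx r) (blockIdx q) = b := by
    by_contra hc; exact h2 (hy r q hc)
  rw [blkdeg_eq] at ha hb ⊢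
  rw [← ha, ← hb]
  have := gP_add_self (gP (blockIdx r))
  rw [show gP (blockIdx p) + gP (blockIdx r) + (gP (blockIdx r) + gP (blockIdx q))
      = gP (blockIdx p) + (gP (blockIdx r) + gP (blockIdx r)) + gP (blockIdx q) by abel,
    this, add_zero]

lemma homog_gbr {a b : ZMod 2 × ZMod 2} {x y : ℤ → ℤ → ℂ}
    (hx : homogI a x) (hy : homogI b y) : homogI (a + b) (gbrI a b x y) := by
  intro p q hne
  simp only [gbrI, Pi.sub_apply, Pi.smul_apply, smul_eq_mul]
  rw [homog_imul hx hy p q hne, homog_imul hy hx p q (by rwa [add_comm b a]), mul_zero,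
    sub_zero]

lemma psoInf_iff (Y : ℤ → ℤ → ℂ) : psoInf Y ↔ FinSupp Y ∧ Y 0 0 = 0 ∧ EP Y := by
  constructor
  · intro hY
    refine ⟨hY.1, hY.2.1, E_of_esc hY.2.1 (esc_of_psoInf hY)⟩
  · rintro ⟨hfin, h00, hE⟩
    exact psoInf_of_esc hfin h00 (esc_of_E hE)

lemma gbr_zero_zero {a b : ZMod 2 × ZMod 2} {x y : ℤ → ℤ → ℂ} (hE : EP (gbrI a b x y)) :
    gbrI a b x y 0 0 = 0 := by
  have := hE 0 0
  rw [show sigP 0 = 0 from rfl,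
    show ccP 0 0 = -1 by unfold ccP lamP tauP; split_ifs <;> first | (exfalso; omega) | norm_num]
    at this
  linear_combination (1/2 : ℂ) * this

end Aux

/-- `pso(∞|∞)` is a `Z₂×Z₂`-graded Lie superalgebra under
`⟦x,y⟧ = xy − (−1)^{a·b} yx`: it is closed under the bracket, and the bracket satisfies
graded antisymmetry and the graded Jacobi identity. -/
theorem psoInf_graded_Lie_superalgebra :
    (∀ (a b : ZMod 2 × ZMod 2) (x y : ℤ → ℤ → ℂ),
      psoInf x → psoInf y → homogI a x → homogI b y →
      psoInf (gbrI a b x y) ∧ homogI (a + b) (gbrI a b x y)) ∧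
    (∀ (a b : ZMod 2 × ZMod 2) (x y : ℤ → ℤ → ℂ),
      psoInf x → psoInf y → homogI a x → homogI b y →
      gbrI a b x y = -(sgn a b • gbrI b a y x)) ∧
    (∀ (a b c : ZMod 2 × ZMod 2) (x y z : ℤ → ℤ → ℂ),
      psoInf x → psoInf y → psoInf z → homogI a x → homogI b y → homogI c z →
      gbrI a (b + c) x (gbrI b c y z) =
        gbrI (a + b) c (gbrI a b x y) z + sgn a b • gbrI b (a + c) y (gbrI a c x z)) := by
  refine ⟨?_, ?_, ?_⟩
  · intro a b x y hx hy ha hb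
    obtain ⟨fx, -, Ex⟩ := (psoInf_iff x).mp hx
    obtain ⟨fy, -, Ey⟩ := (psoInf_iff y).mp hy
    have hE : EP (gbrI a b x y) := E_gbr fx fy ha hb Ex Ey
    refine ⟨(psoInf_iff _).mpr ⟨gbr_finSupp fx fy, gbr_zero_zero hE, hE⟩, homog_gbr ha hb⟩
  · intro a b x y _ _ _ _
    exact gbr_antisym a b x y
  · intro a b c x y z hx hy hz _ _ _
    exact gbr_jacobi a b c x y z hx.1 hy.1 hz.1

end
end
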